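/- arXiv:1704.06464 — 4 statements merged into one kernel-verified Lean document; each statement's English description precedes it below -/
import Mathlib

section
/- Let m ≥ 2 and let G be a finite group such that G/Z(G) is isomorphic to the dihedral group D_{2m} of order 2m. Then G is an AC-group and the energy of the commuting graph is E(Γ_G) = 2((2m − 1)|Z(G)| − m − 1). -/
open scoped Classical

/-- The commuting graph of a group `G`: its vertices are the non-central
elements of `G`, and two distinct vertices are adjacent iff they commute. -/
noncomputable def commGraph (G : Type*) [Group G] :
    SimpleGraph {g : G // g ∉ Subgroup.center G} where
  Adj x y := x ≠ y ∧ (x : G) * y = (y : G) * x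
  symm := ⟨fun _ _ h => ⟨h.1.symm, h.2.symm⟩⟩
  loopless := ⟨fun _ h => h.1 rfl⟩

lemma adjMatrix_isHermitian {V : Type*} [Fintype V] (Γ : SimpleGraph V) :
    (Γ.adjMatrix ℝ).IsHermitian := by
  ext i j
  simp [Matrix.conjTranspose_apply, SimpleGraph.adj_comm]

/-- The energy of a finite graph: the sum of the absolute values of the
eigenvalues of its adjacency matrix. -/
noncomputable def graphEnergy {V : Type*} [Fintype V] (Γ : SimpleGraph V) : ℝ :=
  ∑ i, |(adjMatrix_isHermitian Γ).eigenvalues i|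

open Matrix in
lemma energy_of_cliques {V C : Type*} [Fintype V] [Fintype C]
    (Γ : SimpleGraph V) (c : V → C) (hc : Function.Surjective c)
    (hadj : ∀ x y : V, Γ.Adj x y ↔ x ≠ y ∧ c x = c y) :
    graphEnergy Γ = 2 * ((Fintype.card V : ℝ) - Fintype.card C) := by
  classical
  set A : Matrix V V ℝ := Γ.adjMatrix ℝ with hAdef
  set hA := adjMatrix_isHermitian Γ with hhA
  set lam := hA.eigenvalues with hlam
  set M : Matrix V V ℝ := Matrix.of (fun x y => if c x = c y then (1:ℝ) else 0) with hM
  have hMA : M = A + 1 := by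
    ext x y
    by_cases hxy : x = y
    · subst hxy; simp [hM, hAdef, Matrix.one_apply]
    · by_cases hcc : c x = c y
      · simp [hM, hAdef, Matrix.one_apply, hxy, hadj, hcc]
      · simp [hM, hAdef, Matrix.one_apply, hxy, hadj, hcc]
  -- rank of M is card C
  set W : Matrix V C ℝ := Matrix.of (fun v j => if c v = j then (1:ℝ) else 0) with hW
  have hWWt : W * Wᵀ = M := by
    ext x y
    simp only [Matrix.mul_apply, hW, hM, Matrix.transpose_apply, Matrix.of_apply]
    by_cases hcc : c x = c y
    · rw [hcc]
      rw [Finset.sum_eq_single (c y)] <;> simp +contextual [eq_comm]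
    · rw [Finset.sum_eq_zero]
      · simp [hcc]
      · intro j _
        by_cases h1 : c x = j <;> by_cases h2 : c y = j <;>
          simp_all
  have hWtW : Wᵀ * W = Matrix.diagonal (fun j => ∑ v : V, if c v = j then (1:ℝ) else 0) := by
    ext j k
    by_cases hjk : j = k
    · subst hjk
      rw [Matrix.diagonal_apply_eq]
      simp only [Matrix.mul_apply, hW, Matrix.transpose_apply, Matrix.of_apply]
      apply Finset.sum_congr rfl
      intro v _
      by_cases h : c v = j <;> simp [h]
    · rw [Matrix.diagonal_apply_ne _ hjk]
      simp only [Matrix.mul_apply, hW, Matrix.transpose_apply, Matrix.of_apply]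
      apply Finset.sum_eq_zero
      intro v _
      by_cases h1 : c v = j <;> by_cases h2 : c v = k <;> simp_all
  have hdpos : ∀ j : C, 0 < ∑ v : V, if c v = j then (1:ℝ) else 0 := by
    intro j
    obtain ⟨v, hv⟩ := hc j
    apply Finset.sum_pos' (fun i _ => by positivity)
    exact ⟨v, Finset.mem_univ v, by simp [hv]⟩
  have hrankW : W.rank = Fintype.card C := by
    have h1 : (Wᵀ * W).rank = Fintype.card C := by
      rw [hWtW, Matrix.rank_diagonal]
      apply Fintype.card_congr
      apply Equiv.subtypeUnivEquiv
      intro j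
      exact ne_of_gt (hdpos j)
    rw [Matrix.rank_transpose_mul_self] at h1
    exact h1
  have hrankM : M.rank = Fintype.card C := by
    rw [← hWWt, Matrix.rank_self_mul_transpose, hrankW]
  set U : Matrix V V ℝ := (hA.eigenvectorUnitary : Matrix V V ℝ) with hU
  have hUU' : U * star U = 1 := Matrix.mem_unitaryGroup_iff.mp hA.eigenvectorUnitary.2
  have hUU : star U * U = 1 := Matrix.mem_unitaryGroup_iff'.mp hA.eigenvectorUnitary.2
  have hofreal : (RCLike.ofReal ∘ lam : V → ℝ) = lam := by
    ext i; simp [RCLike.ofReal]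
  have hspec : A = U * Matrix.diagonal lam * star U := by
    have := hA.spectral_theorem
    rw [hofreal] at this
    exact this
  have hdetU : IsUnit U.det := by
    have : U.det * (star U).det = 1 := by rw [← Matrix.det_mul, hUU', Matrix.det_one]
    exact IsUnit.of_mul_eq_one _ this
  have hdetsU : IsUnit (star U).det := by
    have : (star U).det * U.det = 1 := by rw [← Matrix.det_mul, hUU, Matrix.det_one]
    exact IsUnit.of_mul_eq_one _ this
  have hMspec : M = U * Matrix.diagonal (fun i => lam i + 1) * star U := by
    rw [hMA, hspec]
    have h1 : (1 : Matrix V V ℝ) = U * 1 * star U := by rw [Matrix.mul_one, hUU']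
    rw [h1]
    rw [← Matrix.diagonal_one, ← Matrix.diagonal_add]
    noncomm_ring
  have hrankM2 : M.rank = Fintype.card {i // lam i + 1 ≠ 0} := by
    rw [hMspec, Matrix.rank_mul_eq_left_of_isUnit_det _ _ hdetsU,
      Matrix.rank_mul_eq_right_of_isUnit_det _ _ hdetU, Matrix.rank_diagonal]
  have htrace : ∑ i, lam i = 0 := by
    have h1 : A.trace = 0 := by simp [hAdef]
    have h2 : A.trace = (Matrix.diagonal lam).trace := by
      rw [hspec, Matrix.trace_mul_cycle, hUU, Matrix.one_mul]
    rw [h1, Matrix.trace_diagonal] at h2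
    exact h2.symm
  have hdich : ∀ i : V, lam i = -1 ∨ 0 ≤ lam i := by
    intro i
    by_cases hne : lam i = -1
    · exact Or.inl hne
    right
    set v : V → ℝ := ⇑(hA.eigenvectorBasis i) with hv
    have hAv : A *ᵥ v = lam i • v := hA.mulVec_eigenvectorBasis i
    have hvne : ∃ x, v x ≠ 0 := by
      by_contra hcon
      push_neg at hcon
      have : hA.eigenvectorBasis i = 0 := by
        ext x; exact hcon x
      exact hA.eigenvectorBasis.orthonormal.ne_zero i this
    obtain ⟨x₀, hx₀⟩ := hvne
    have hMv : M *ᵥ v = (lam i + 1) • v := by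
      rw [hMA, Matrix.add_mulVec, hAv, Matrix.one_mulVec]
      ext x
      simp only [Pi.add_apply, Pi.smul_apply, smul_eq_mul]
      ring
    set μ := lam i + 1 with hμ
    have hμ0 : μ ≠ 0 := fun hh => hne (by linarith)
    have hkey : ∀ x, μ * v x = ∑ y, if c x = c y then v y else 0 := by
      intro x
      have h3 := congrFun hMv x
      simp only [Matrix.mulVec, dotProduct, Pi.smul_apply, smul_eq_mul] at h3
      rw [← h3]
      apply Finset.sum_congr rfl
      intro y _
      by_cases h : c x = c y <;> simp [hM, h]
    have hconst : ∀ y, c y = c x₀ → v y = v x₀ := by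
      intro y hy
      have h1 := hkey y
      rw [hy] at h1
      exact mul_left_cancel₀ hμ0 (h1.trans (hkey x₀).symm)
    have hsum : μ * v x₀ = (∑ y, if c x₀ = c y then (1:ℝ) else 0) * v x₀ := by
      rw [hkey x₀, Finset.sum_mul]
      apply Finset.sum_congr rfl
      intro y _
      by_cases hcy : c x₀ = c y
      · simp [hcy, hconst y hcy.symm]
      · simp [hcy]
    have hμeq : μ = ∑ y, if c x₀ = c y then (1:ℝ) else 0 := mul_right_cancel₀ hx₀ hsum
    have hge : (1:ℝ) ≤ ∑ y, if c x₀ = c y then (1:ℝ) else 0 := by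
      have h4 := Finset.single_le_sum (f := fun y => if c x₀ = c y then (1:ℝ) else 0)
        (fun y _ => by positivity) (Finset.mem_univ x₀)
      simpa using h4
    have h5 : 1 ≤ μ := hμeq ▸ hge
    linarith
  -- cardinalities
  have hcard : Fintype.card {i : V // lam i ≠ -1} = Fintype.card C := by
    rw [← hrankM, hrankM2]
    apply Fintype.card_congr
    apply Equiv.subtypeEquivRight
    intro i
    constructor <;> intro h1 h2 <;> apply h1 <;> linarith
  set S : Finset V := Finset.univ.filter (fun i => lam i = -1) with hS
  set Sc : Finset V := Finset.univ.filter (fun i => ¬ lam i = -1) with hSc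
  have hScCard : (Sc.card : ℝ) = Fintype.card C := by
    rw [← hcard, Fintype.card_subtype]
  have hStot : S.card + Sc.card = Fintype.card V := by
    have h6 := Finset.card_filter_add_card_filter_not
      (s := (Finset.univ : Finset V)) (p := fun i => lam i = -1)
    simpa [hS, hSc] using h6
  have hSsum : ∑ i ∈ S, lam i = -(S.card : ℝ) := by
    have h8 : ∀ i ∈ S, lam i = -1 := fun i hi => (Finset.mem_filter.mp hi).2
    rw [Finset.sum_congr rfl h8]
    simp
  have hsplit : ∑ i, |lam i| = ∑ i ∈ S, |lam i| + ∑ i ∈ Sc, |lam i| :=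
    (Finset.sum_filter_add_sum_filter_not Finset.univ _ _).symm
  have hsplit2 : ∑ i, lam i = ∑ i ∈ S, lam i + ∑ i ∈ Sc, lam i :=
    (Finset.sum_filter_add_sum_filter_not Finset.univ _ _).symm
  have hScsum : ∑ i ∈ Sc, lam i = (S.card : ℝ) := by
    have := hsplit2
    rw [htrace, hSsum] at this
    linarith
  have hE : graphEnergy Γ = 2 * (S.card : ℝ) := by
    show ∑ i, |lam i| = 2 * (S.card : ℝ)
    rw [hsplit]
    have e1 : ∑ i ∈ S, |lam i| = (S.card : ℝ) := by
      have h9 : ∀ i ∈ S, |lam i| = 1 := by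
        intro i hi
        rw [(Finset.mem_filter.mp hi).2]
        norm_num
      rw [Finset.sum_congr rfl h9]
      simp
    have e2 : ∑ i ∈ Sc, |lam i| = ∑ i ∈ Sc, lam i := by
      apply Finset.sum_congr rfl
      intro i hi
      have hne := (Finset.mem_filter.mp hi).2
      rcases hdich i with h | h
      · exact absurd h hne
      · exact abs_of_nonneg h
    rw [e1, e2, hScsum]
    ring
  rw [hE]
  have : (S.card : ℝ) = (Fintype.card V : ℝ) - (Fintype.card C : ℝ) := by
    have := hStot
    have h7 : (S.card : ℝ) + (Sc.card : ℝ) = (Fintype.card V : ℝ) := by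
      exact_mod_cast hStot
    linarith [hScCard]
  rw [this]

def dihLabel {m : ℕ} : DihedralGroup m → Unit ⊕ ZMod m
  | DihedralGroup.r _ => Sum.inl ()
  | DihedralGroup.sr j => Sum.inr j

/-- `G` is an AC-group: the centralizer of every non-central element is Abelian. -/
def IsACGroup (G : Type*) [Group G] : Prop :=
  ∀ x : G, x ∉ Subgroup.center G →
    ∀ y ∈ Subgroup.centralizer ({x} : Set G), ∀ z ∈ Subgroup.centralizer ({x} : Set G),
      y * z = z * y

/-- If `G/Z(G) ≅ D_{2m}` (the dihedral group of order `2m`, `m ≥ 2`), then `G` is an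
AC-group and `E(Γ_G) = 2((2m - 1)|Z(G)| - m - 1)`. -/
theorem energy_commGraph_of_quotient_dihedral
    (m : ℕ) (hm : 2 ≤ m) (G : Type*) [Group G] [Fintype G]
    (h : Nonempty ((G ⧸ Subgroup.center G) ≃* DihedralGroup m)) :
    IsACGroup G ∧
      graphEnergy (commGraph G) =
        2 * ((2 * (m : ℝ) - 1) * (Nat.card (Subgroup.center G) : ℝ) - m - 1) := by
  classical
  obtain ⟨e⟩ := h
  haveI : NeZero m := ⟨by omega⟩
  set Z := Subgroup.center G with hZ
  set π : G →* G ⧸ Z := QuotientGroup.mk' Z with hπ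
  have hπker : ∀ g : G, π g = 1 ↔ g ∈ Z := fun g => QuotientGroup.eq_one_iff g
  have hπsurj : Function.Surjective π := QuotientGroup.mk'_surjective Z
  set Rot : G → Prop := fun g => ∃ i : ZMod m, e (π g) = DihedralGroup.r i with hRot
  -- central elements are "rotations"
  have hz_rot : ∀ g ∈ Z, Rot g := by
    intro g hg
    refine ⟨0, ?_⟩
    rw [(hπker g).mpr hg, map_one, DihedralGroup.one_def]
  -- representation of rotations
  obtain ⟨t, ht⟩ := hπsurj (e.symm (DihedralGroup.r 1))
  have het : e (π t) = DihedralGroup.r 1 := by rw [ht, MulEquiv.apply_symm_apply]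
  have hrot_rep : ∀ g : G, Rot g → ∃ (k : ℕ) (z : G), z ∈ Z ∧ g = t ^ k * z := by
    intro g ⟨i, hi⟩
    refine ⟨i.val, (t ^ i.val)⁻¹ * g, ?_, by group⟩
    rw [← hπker]
    have hπtk : e (π (t ^ i.val)) = DihedralGroup.r i := by
      rw [map_pow, map_pow, het, DihedralGroup.r_one_pow, ZMod.natCast_rightInverse i]
    have : π (t ^ i.val) = π g := e.injective (by rw [hπtk, hi])
    rw [map_mul, map_inv, this, inv_mul_cancel]
  have hcomm_rot : ∀ a b : G, Rot a → Rot b → a * b = b * a := by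
    intro a b ha hb
    obtain ⟨k, z, hz, rfl⟩ := hrot_rep a ha
    obtain ⟨l, w, hw, rfl⟩ := hrot_rep b hb
    have hzc : ∀ g : G, Commute g z := fun g => Subgroup.mem_center_iff.mp hz g
    have hwc : ∀ g : G, Commute g w := fun g => Subgroup.mem_center_iff.mp hw g
    exact (Commute.mul_left (((Commute.refl t).pow_pow k l).mul_right (hwc (t ^ k)))
      ((hzc (t ^ l)).symm.mul_right (hzc w).symm)).eq
  have hnotrot : ∀ g : G, ¬ Rot g → ∃ j : ZMod m, e (π g) = DihedralGroup.sr j := by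
    intro g hg
    rcases hd : e (π g) with i | j
    · exact absurd ⟨i, hd⟩ hg
    · exact ⟨j, rfl⟩
  have hmul_inv_rot : ∀ a b : G, ¬ Rot a → ¬ Rot b → Rot (a * b⁻¹) := by
    intro a b ha hb
    obtain ⟨i, hi⟩ := hnotrot a ha
    obtain ⟨j, hj⟩ := hnotrot b hb
    have hinv : (DihedralGroup.sr j)⁻¹ = DihedralGroup.sr j :=
      inv_eq_of_mul_eq_one_right (DihedralGroup.sr_mul_self j)
    exact ⟨_, by rw [map_mul, map_mul, map_inv, map_inv, hi, hj, hinv,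
      DihedralGroup.sr_mul_sr]⟩
  -- centralizer of a noncentral rotation consists of rotations
  have hcent_rot : ∀ x : G, x ∉ Z → Rot x → ∀ g : G, g * x = x * g → Rot g := by
    intro x hx hrx g hg
    by_contra hgr
    apply hx
    apply Subgroup.mem_center_iff.mpr
    intro w
    by_cases hw : Rot w
    · exact hcomm_rot w x hw hrx
    · have hu : Rot (w * g⁻¹) := hmul_inv_rot w g hw hgr
      have hux : (w * g⁻¹) * x = x * (w * g⁻¹) := hcomm_rot _ _ hu hrx
      calc w * x = (w * g⁻¹) * (g * x) := by group
        _ = (w * g⁻¹) * (x * g) := by rw [hg]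
        _ = ((w * g⁻¹) * x) * g := by group
        _ = (x * (w * g⁻¹)) * g := by rw [hux]
        _ = x * w := by group
  -- commuting with a non-rotation forces membership in Z or same coset
  have hrefl_comm : ∀ x : G, ¬ Rot x → ∀ y : G, y * x = x * y → y ∈ Z ∨ π y = π x := by
    intro x hx y hyx
    by_cases hy : Rot y
    · left
      by_contra hyZ
      exact hx (hcent_rot y hyZ hy x hyx.symm)
    · right
      set u := y * x⁻¹ with hu
      have hur : Rot u := hmul_inv_rot y x hy hx
      have hux : x * u = u * x := by
        rw [hu]
        calc x * (y * x⁻¹) = (x * y) * x⁻¹ := by group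
          _ = (y * x) * x⁻¹ := by rw [hyx]
          _ = y * x⁻¹ * x := by group
      have huZ : u ∈ Z := by
        by_contra huZ
        exact hx (hcent_rot u huZ hur x hux)
      have : π u = 1 := (hπker u).mpr huZ
      rw [hu, map_mul, map_inv] at this
      have := mul_inv_eq_one.mp this
      exact this
  -- same coset implies commuting
  have hcoset_comm : ∀ x y : G, π y = π x → y * x = x * y := by
    intro x y hxy
    have : π (y * x⁻¹) = 1 := by rw [map_mul, map_inv, hxy, mul_inv_cancel]
    have hz : y * x⁻¹ ∈ Z := (hπker _).mp this
    have hc := Subgroup.mem_center_iff.mp hz x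
    calc y * x = ((y * x⁻¹) * x) * x := by group
      _ = (x * (y * x⁻¹)) * x := by rw [← hc]
      _ = x * y := by group
  haveI : Fact (1 < m) := ⟨by omega⟩
  constructor
  · -- AC group
    intro x hx y hy z hzc
    rw [Subgroup.mem_centralizer_singleton_iff] at hy hzc
    by_cases hrx : Rot x
    · exact hcomm_rot y z (hcent_rot x hx hrx y hy) (hcent_rot x hx hrx z hzc)
    · rcases hrefl_comm x hrx y hy with hyZ | hyx
      · exact (Subgroup.mem_center_iff.mp hyZ z).symm
      · rcases hrefl_comm x hrx z hzc with hzZ | hzx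
        · exact Subgroup.mem_center_iff.mp hzZ y
        · exact hcoset_comm z y (hyx.trans hzx.symm)
  · -- energy
    set c : {g : G // g ∉ Subgroup.center G} → Unit ⊕ ZMod m :=
      fun v => dihLabel (e (π v.1)) with hc
    have hnotrot' : ∀ g : G, (∃ j : ZMod m, e (π g) = DihedralGroup.sr j) → ¬ Rot g := by
      rintro g ⟨j, hj⟩ ⟨i, hi⟩
      rw [hj] at hi
      exact nomatch hi
    have hadj : ∀ x y : {g : G // g ∉ Subgroup.center G},
        (commGraph G).Adj x y ↔ x ≠ y ∧ c x = c y := by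
      intro x y
      show (x ≠ y ∧ (x : G) * y = (y : G) * x) ↔ _
      constructor
      · rintro ⟨hne, hcomm⟩
        refine ⟨hne, ?_⟩
        by_cases hrx : Rot x.1
        · have hry : Rot y.1 := hcent_rot x.1 x.2 hrx y.1 hcomm.symm
          obtain ⟨i, hi⟩ := hrx
          obtain ⟨i', hi'⟩ := hry
          simp [hc, hi, hi', dihLabel]
        · rcases hrefl_comm x.1 hrx y.1 hcomm.symm with hyZ | hyx
          · exact absurd hyZ y.2
          · simp [hc, hyx]
      · rintro ⟨hne, hceq⟩
        refine ⟨hne, ?_⟩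
        rcases hdx : e (π x.1) with i | i <;> rcases hdy : e (π y.1) with i' | i' <;>
          simp [hc, hdx, hdy, dihLabel] at hceq
        · exact hcomm_rot x.1 y.1 ⟨i, hdx⟩ ⟨i', hdy⟩
        · subst hceq
          exact (hcoset_comm x.1 y.1 (e.injective (hdy.trans hdx.symm))).symm
    have hcsurj : Function.Surjective c := by
      rintro (⟨⟩ | j)
      · have htZ : t ∉ Subgroup.center G := by
          intro htZ
          have h1 := (hπker t).mpr htZ
          rw [h1, map_one, DihedralGroup.one_def] at het
          have : (0 : ZMod m) = 1 := DihedralGroup.r.inj het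
          exact zero_ne_one this
        refine ⟨⟨t, htZ⟩, ?_⟩
        simp [hc, het, dihLabel]
      · obtain ⟨s, hs⟩ := hπsurj (e.symm (DihedralGroup.sr j))
        have hes : e (π s) = DihedralGroup.sr j := by rw [hs, MulEquiv.apply_symm_apply]
        have hsZ : s ∉ Subgroup.center G := by
          intro hsZ
          have h1 := (hπker s).mpr hsZ
          rw [h1, map_one, DihedralGroup.one_def] at hes
          exact nomatch hes
        refine ⟨⟨s, hsZ⟩, ?_⟩
        simp [hc, hes, dihLabel]
    rw [energy_of_cliques (commGraph G) c hcsurj hadj]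
    -- cardinalities
    have hcardC : (Fintype.card (Unit ⊕ ZMod m) : ℝ) = 1 + m := by
      simp [ZMod.card]
    have hcardG : (Fintype.card G : ℕ) = 2 * m * Nat.card (Subgroup.center G) := by
      have h1 := Subgroup.card_eq_card_quotient_mul_card_subgroup (Subgroup.center G)
      have h2 : Nat.card (G ⧸ Subgroup.center G) = 2 * m := by
        rw [Nat.card_congr e.toEquiv, DihedralGroup.nat_card]
      rw [Nat.card_eq_fintype_card] at h1
      rw [h1, h2]
    have hcardZle : Nat.card (Subgroup.center G) ≤ Fintype.card G := by
      rw [hcardG]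
      nlinarith [Nat.card_pos (α := Subgroup.center G)]
    have hcardV : (Fintype.card {g : G // g ∉ Subgroup.center G} : ℝ) =
        2 * m * Nat.card (Subgroup.center G) - Nat.card (Subgroup.center G) := by
      have h3 : Fintype.card {g : G // g ∉ Subgroup.center G} =
          Fintype.card G - Fintype.card {g : G // g ∈ Subgroup.center G} :=
        Fintype.card_subtype_compl _
      have h4 : Fintype.card {g : G // g ∈ Subgroup.center G} =
          Nat.card (Subgroup.center G) := (Nat.card_eq_fintype_card).symm
      rw [h3, h4, Nat.cast_sub hcardZle, hcardG]
      push_cast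
      ring
    rw [hcardV, hcardC]
    have hn1 : (1 : ℝ) ≤ Nat.card (Subgroup.center G) := by
      exact_mod_cast Nat.card_pos (α := Subgroup.center G)
    ring
end

section
/- Let p be a prime and let G be a non-Abelian group of order p³. Then the energy of the commuting graph is E(Γ_G) = 2(p³ − 2p − 1). -/
open scoped Classical
open scoped Matrix

section GroupFacts
variable {p : ℕ} {G : Type*} [Group G] [Fintype G]

lemma card_center_eq (hp : p.Prime) (hcard : Fintype.card G = p ^ 3)
    (hna : ∃ x y : G, x * y ≠ y * x) : Nat.card (Subgroup.center G) = p := by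
  haveI : Fact p.Prime := ⟨hp⟩
  have hpg : IsPGroup p G := IsPGroup.of_card (n := 3) (by simp [Nat.card_eq_fintype_card, hcard])
  haveI : Nontrivial G := by
    rcases hna with ⟨x, y, h⟩
    exact ⟨x * y, y * x, h⟩
  have hdvd : Nat.card (Subgroup.center G) ∣ p ^ 3 := by
    simpa [Nat.card_eq_fintype_card, hcard] using
      Subgroup.card_subgroup_dvd_card (Subgroup.center G)
  obtain ⟨k, hk3, hk⟩ := (Nat.dvd_prime_pow hp).1 hdvd
  haveI : Nontrivial (Subgroup.center G) := hpg.center_nontrivial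
  have hk0 : k ≠ 0 := by
    rintro rfl
    simp only [pow_zero] at hk
    exact ((Finite.one_lt_card_iff_nontrivial.2 inferInstance)).ne' hk
  have hkne3 : k ≠ 3 := by
    rintro rfl
    have : Subgroup.center G = ⊤ := by
      apply Subgroup.eq_top_of_card_eq
      rw [hk, Nat.card_eq_fintype_card, hcard]
    rcases hna with ⟨x, y, h⟩
    exact h ((Subgroup.mem_center_iff.1 (this ▸ Subgroup.mem_top x)) y).symm
  have hkne2 : k ≠ 2 := by
    rintro rfl
    have hq : Nat.card (G ⧸ Subgroup.center G) = p := by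
      have h1 := Subgroup.card_eq_card_quotient_mul_card_subgroup (Subgroup.center G)
      rw [hk, Nat.card_eq_fintype_card, hcard] at h1
      have hp2 : p ^ 2 ≠ 0 := pow_ne_zero _ hp.pos.ne'
      have : p ^ 3 = p * p ^ 2 := by ring
      rw [this] at h1
      exact (Nat.eq_of_mul_eq_mul_right (Nat.pos_of_ne_zero hp2) h1.symm)
    haveI : IsCyclic (G ⧸ Subgroup.center G) := isCyclic_of_prime_card hq
    rcases hna with ⟨x, y, h⟩
    exact h (commutative_of_cyclic_center_quotient (QuotientGroup.mk' (Subgroup.center G))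
      (le_of_eq (QuotientGroup.ker_mk' _)) x y)
  interval_cases k
  · exact absurd rfl hk0
  · rw [hk, pow_one]
  · exact absurd rfl hkne2
  · exact absurd rfl hkne3

end GroupFacts

section GroupFacts2
variable {p : ℕ} {G : Type*} [Group G] [Fintype G]

lemma card_centralizer_eq (hp : p.Prime) (hcard : Fintype.card G = p ^ 3)
    (hna : ∃ x y : G, x * y ≠ y * x) {x : G} (hx : x ∉ Subgroup.center G) :
    Nat.card (Subgroup.centralizer ({x} : Set G)) = p ^ 2 := by
  haveI : Fact p.Prime := ⟨hp⟩
  set C := Subgroup.centralizer ({x} : Set G) with hC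
  have hZle : Subgroup.center G ≤ C := Subgroup.center_le_centralizer _
  have hxC : x ∈ C := Subgroup.mem_centralizer_singleton_iff.2 rfl
  have hdvd : Nat.card C ∣ p ^ 3 := by
    simpa [Nat.card_eq_fintype_card, hcard] using Subgroup.card_subgroup_dvd_card C
  obtain ⟨k, hk3, hk⟩ := (Nat.dvd_prime_pow hp).1 hdvd
  have hZcard : Nat.card (Subgroup.center G) = p := card_center_eq hp hcard hna
  have hpdvd : p ∣ Nat.card C := hZcard ▸ Subgroup.card_dvd_of_le hZle
  have hCnetop : C ≠ ⊤ := by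
    intro htop
    apply hx
    rw [Subgroup.mem_center_iff]
    intro g
    have hg : g ∈ C := htop ▸ Subgroup.mem_top g
    exact (Subgroup.mem_centralizer_singleton_iff.1 hg).symm ▸
      (Subgroup.mem_centralizer_singleton_iff.1 hg).symm
  have hk0 : k ≠ 0 := by
    rintro rfl
    rw [hk, pow_zero] at hpdvd
    exact hp.one_lt.ne' (Nat.eq_one_of_dvd_one hpdvd)
  have hk1 : k ≠ 1 := by
    rintro rfl
    rw [pow_one] at hk
    have : Subgroup.center G = C := Subgroup.eq_of_le_of_card_ge hZle (le_of_eq (hk.trans hZcard.symm))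
    exact hx (this ▸ hxC)
  have hkne3 : k ≠ 3 := by
    rintro rfl
    apply hCnetop
    apply Subgroup.eq_top_of_card_eq
    rw [hk, Nat.card_eq_fintype_card, hcard]
  interval_cases k
  · exact absurd rfl hk0
  · exact absurd rfl hk1
  · exact hk
  · exact absurd rfl hkne3

lemma centralizer_comm (hp : p.Prime) (hcard : Fintype.card G = p ^ 3)
    (hna : ∃ x y : G, x * y ≠ y * x) {x : G} (hx : x ∉ Subgroup.center G)
    {y z : G} (hy : y ∈ Subgroup.centralizer ({x} : Set G))
    (hz : z ∈ Subgroup.centralizer ({x} : Set G)) : y * z = z * y := by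
  haveI : Fact p.Prime := ⟨hp⟩
  have h := IsPGroup.commutative_of_card_eq_prime_sq
    (card_centralizer_eq hp hcard hna hx) ⟨y, hy⟩ ⟨z, hz⟩
  exact Subtype.ext_iff.1 h

lemma centralizer_eq_of_commute (hp : p.Prime) (hcard : Fintype.card G = p ^ 3)
    (hna : ∃ x y : G, x * y ≠ y * x) {x y : G} (hx : x ∉ Subgroup.center G)
    (hy : y ∉ Subgroup.center G) (hxy : x * y = y * x) :
    Subgroup.centralizer ({x} : Set G) = Subgroup.centralizer ({y} : Set G) := by
  have hyCx : y ∈ Subgroup.centralizer ({x} : Set G) :=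
    Subgroup.mem_centralizer_singleton_iff.2 hxy.symm
  have hle : Subgroup.centralizer ({x} : Set G) ≤ Subgroup.centralizer ({y} : Set G) := by
    intro g hg
    exact Subgroup.mem_centralizer_singleton_iff.2 (centralizer_comm hp hcard hna hx hg hyCx)
  exact (Subgroup.eq_of_le_of_card_ge hle (le_of_eq ((card_centralizer_eq hp hcard hna hy).trans
    (card_centralizer_eq hp hcard hna hx).symm))).symm ▸ rfl

end GroupFacts2


section Count
variable {p : ℕ} {G : Type*} [Group G] [Fintype G]


/-- The set of noncentral elements commuting with `v`. -/
noncomputable def commSet (G : Type*) [Group G] [Fintype G]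
    (v : {g : G // g ∉ Subgroup.center G}) : Finset {g : G // g ∉ Subgroup.center G} :=
  Finset.univ.filter (fun u => (u : G) * (v : G) = (v : G) * (u : G))

lemma card_commSet (hp : p.Prime) (hcard : Fintype.card G = p ^ 3)
    (hna : ∃ x y : G, x * y ≠ y * x) (v : {g : G // g ∉ Subgroup.center G}) :
    (commSet G v).card = p ^ 2 - p := by
  classical
  have h1 : (commSet G v).card
      = Fintype.card {u : {g : G // g ∉ Subgroup.center G} //
          (u : G) * (v : G) = (v : G) * (u : G)} := by
    rw [Fintype.card_subtype]; rfl
  have h2 : Fintype.card {u : {g : G // g ∉ Subgroup.center G} //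
        (u : G) * (v : G) = (v : G) * (u : G)}
      = Fintype.card {g : G // g ∉ Subgroup.center G ∧ g * (v : G) = (v : G) * g} :=
    Fintype.card_congr (Equiv.subtypeSubtypeEquivSubtypeInter
      (fun g : G => g ∉ Subgroup.center G) (fun g : G => g * (v : G) = (v : G) * g))
  rw [h1, h2, Fintype.card_subtype]
  have hB : (Finset.univ.filter (fun g : G => g ∈ Subgroup.center G)).card = p := by
    rw [← Fintype.card_subtype, ← Nat.card_eq_fintype_card]
    exact card_center_eq hp hcard hna
  have hA : (Finset.univ.filter
      (fun g : G => g * (v : G) = (v : G) * g)).card = p ^ 2 := by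
    have : (Finset.univ.filter (fun g : G => g * (v : G) = (v : G) * g))
        = Finset.univ.filter (fun g : G => g ∈ Subgroup.centralizer ({(v : G)} : Set G)) := by
      ext g; simp [Subgroup.mem_centralizer_singleton_iff]
    rw [this, ← Fintype.card_subtype, ← Nat.card_eq_fintype_card]
    exact card_centralizer_eq hp hcard hna v.2
  have hsub : (Finset.univ.filter (fun g : G => g ∈ Subgroup.center G))
      ⊆ Finset.univ.filter (fun g : G => g * (v : G) = (v : G) * g) := by
    intro g hg
    simp only [Finset.mem_filter, Finset.mem_univ, true_and] at hg ⊢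
    exact ((Subgroup.mem_center_iff.1 hg) (v : G)).symm
  have heq : (Finset.univ.filter
        (fun g : G => g ∉ Subgroup.center G ∧ g * (v : G) = (v : G) * g))
      = Finset.univ.filter (fun g : G => g * (v : G) = (v : G) * g)
        \ Finset.univ.filter (fun g : G => g ∈ Subgroup.center G) := by
    ext g
    simp only [Finset.mem_filter, Finset.mem_univ, true_and, Finset.mem_sdiff]
    tauto
  rw [heq, Finset.card_sdiff_of_subset hsub, hA, hB]

lemma card_noncentral (hp : p.Prime) (hcard : Fintype.card G = p ^ 3)
    (hna : ∃ x y : G, x * y ≠ y * x) :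
    Fintype.card {g : G // g ∉ Subgroup.center G} = p ^ 3 - p := by
  classical
  rw [Fintype.card_subtype_compl]
  congr 1
  rw [← Nat.card_eq_fintype_card]
  exact card_center_eq hp hcard hna

end Count

section Mat
variable {p : ℕ} {G : Type*} [Group G] [Fintype G]

lemma adj_matrix_sq (hp : p.Prime) (hcard : Fintype.card G = p ^ 3)
    (hna : ∃ x y : G, x * y ≠ y * x) :
    ((commGraph G).adjMatrix ℝ) * ((commGraph G).adjMatrix ℝ)
      = (((p : ℝ) ^ 2 - p) - 2) • ((commGraph G).adjMatrix ℝ)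
        + (((p : ℝ) ^ 2 - p) - 1)
          • (1 : Matrix {g : G // g ∉ Subgroup.center G} {g : G // g ∉ Subgroup.center G} ℝ) := by
  classical
  have hple : p ≤ p ^ 2 := Nat.le_self_pow (by norm_num) p
  have hcast : ((p ^ 2 - p : ℕ) : ℝ) = (p : ℝ) ^ 2 - p := by
    push_cast [Nat.cast_sub hple]; ring
  ext v w
  rw [Matrix.mul_apply]
  have hterm : ∀ u, ((commGraph G).adjMatrix ℝ) v u * ((commGraph G).adjMatrix ℝ) u w
      = if ((commGraph G).Adj v u ∧ (commGraph G).Adj u w) then (1 : ℝ) else 0 := by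
    intro u
    by_cases h1 : (commGraph G).Adj v u <;> by_cases h2 : (commGraph G).Adj u w <;>
      simp [h1, h2]
  rw [Finset.sum_congr rfl (fun u _ => hterm u), Finset.sum_boole]
  simp only [Matrix.add_apply, Matrix.smul_apply, SimpleGraph.adjMatrix_apply,
    Matrix.one_apply, smul_eq_mul]
  by_cases hvw : v = w
  · subst hvw
    have hfilt : Finset.univ.filter
        (fun u => (commGraph G).Adj v u ∧ (commGraph G).Adj u v) = commSet G v \ {v} := by
      ext u
      simp only [Finset.mem_filter, Finset.mem_univ, true_and, Finset.mem_sdiff,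
        Finset.mem_singleton, commSet]
      constructor
      · rintro ⟨⟨hne, hc⟩, -⟩
        exact ⟨hc.symm, fun h => hne h.symm⟩
      · rintro ⟨hc, hne⟩
        exact ⟨⟨fun h => hne h.symm, hc.symm⟩, ⟨hne, hc⟩⟩
    have hvmem : v ∈ commSet G v := by simp [commSet]
    have hsub : ({v} : Finset _) ⊆ commSet G v := Finset.singleton_subset_iff.2 hvmem
    have hcardeq := Finset.card_sdiff_add_card_eq_card hsub
    rw [card_commSet hp hcard hna, Finset.card_singleton] at hcardeq
    rw [hfilt]
    have hc1 : ((commSet G v \ {v}).card : ℝ) = ((p ^ 2 - p : ℕ) : ℝ) - 1 := by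
      have h := congrArg (fun n : ℕ => (n : ℝ)) hcardeq
      push_cast at h
      linarith
    rw [hc1, hcast]
    simp
  · by_cases hadj : (commGraph G).Adj v w
    · have hfilt : Finset.univ.filter
          (fun u => (commGraph G).Adj v u ∧ (commGraph G).Adj u w)
            = commSet G v \ {v, w} := by
        ext u
        simp only [Finset.mem_filter, Finset.mem_univ, true_and, Finset.mem_sdiff,
          Finset.mem_insert, Finset.mem_singleton, commSet]
        constructor
        · rintro ⟨⟨hne1, hc1⟩, ⟨hne2, hc2⟩⟩
          exact ⟨hc1.symm, by push_neg; exact ⟨fun h => hne1 h.symm, hne2⟩⟩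
        · rintro ⟨hc, hne⟩
          push_neg at hne
          have hCeq := centralizer_eq_of_commute hp hcard hna v.2 w.2 hadj.2
          have huC : (u : G) ∈ Subgroup.centralizer ({(v : G)} : Set G) :=
            Subgroup.mem_centralizer_singleton_iff.2 (by rw [hc])
          have huCw : (u : G) * (w : G) = (w : G) * (u : G) :=
            Subgroup.mem_centralizer_singleton_iff.1 (hCeq ▸ huC)
          exact ⟨⟨fun h => hne.1 h.symm, hc.symm⟩, ⟨hne.2, huCw⟩⟩
      have hvmem : v ∈ commSet G v := by simp [commSet]
      have hwmem : w ∈ commSet G v := by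
        simp only [commSet, Finset.mem_filter, Finset.mem_univ, true_and]
        exact hadj.2.symm
      have hsub : ({v, w} : Finset _) ⊆ commSet G v := by
        intro u hu
        rcases Finset.mem_insert.1 hu with h | h
        · exact h ▸ hvmem
        · exact (Finset.mem_singleton.1 h) ▸ hwmem
      have hcard2 : ({v, w} : Finset _).card = 2 := Finset.card_pair hvw
      have hcardeq := Finset.card_sdiff_add_card_eq_card hsub
      rw [card_commSet hp hcard hna, hcard2] at hcardeq
      rw [hfilt]
      have hc1 : ((commSet G v \ {v, w}).card : ℝ) = ((p ^ 2 - p : ℕ) : ℝ) - 2 := by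
        have h := congrArg (fun n : ℕ => (n : ℝ)) hcardeq
        push_cast at h
        linarith
      rw [hc1, hcast]
      simp [hadj, hvw]
    · have hfilt : Finset.univ.filter
          (fun u => (commGraph G).Adj v u ∧ (commGraph G).Adj u w) = ∅ := by
        ext u
        simp only [Finset.mem_filter, Finset.mem_univ, true_and, Finset.notMem_empty,
          iff_false]
        rintro ⟨⟨hne1, hc1⟩, ⟨hne2, hc2⟩⟩
        apply hadj
        refine ⟨hvw ∘ id, ?_⟩
        have hCv := centralizer_eq_of_commute hp hcard hna u.2 v.2 (by rw [hc1])
        have hCw := centralizer_eq_of_commute hp hcard hna u.2 w.2 hc2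
        have hvC : (v : G) ∈ Subgroup.centralizer ({(v : G)} : Set G) :=
          Subgroup.mem_centralizer_singleton_iff.2 rfl
        have hvCw : (v : G) ∈ Subgroup.centralizer ({(w : G)} : Set G) := by
          rw [← hCw, hCv]; exact hvC
        exact Subgroup.mem_centralizer_singleton_iff.1 hvCw
      rw [hfilt]
      simp [hadj, hvw]

end Mat

lemma sum_eigenvalues_eq_trace {n : Type*} [Fintype n] [DecidableEq n]
    {A : Matrix n n ℝ} (hA : A.IsHermitian) :
    ∑ i, hA.eigenvalues i = A.trace := by
  rw [hA.trace_eq_sum_eigenvalues]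
  simp

lemma eigenvalue_quadratic {n : Type*} [Fintype n] [DecidableEq n]
    {A : Matrix n n ℝ} (hA : A.IsHermitian)
    {c d : ℝ} (hsq : A * A = c • A + d • 1) (i : n) :
    hA.eigenvalues i ^ 2 = c * hA.eigenvalues i + d := by
  have hv := hA.mulVec_eigenvectorBasis i
  have hvne : ⇑(hA.eigenvectorBasis i) ≠ 0 := by
    intro h
    apply hA.eigenvectorBasis.orthonormal.ne_zero i
    ext x
    exact congrFun h x
  have h2 : (A * A) *ᵥ ⇑(hA.eigenvectorBasis i)
      = (hA.eigenvalues i ^ 2) • ⇑(hA.eigenvectorBasis i) := by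
    rw [← Matrix.mulVec_mulVec, hv, Matrix.mulVec_smul, hv, smul_smul, ← sq]
  rw [hsq, Matrix.add_mulVec, Matrix.smul_mulVec, hv, Matrix.smul_mulVec,
    Matrix.one_mulVec, smul_smul] at h2
  have h3 : (hA.eigenvalues i ^ 2 - (c * hA.eigenvalues i + d)) • ⇑(hA.eigenvectorBasis i) = 0 := by
    rw [sub_smul, ← h2, add_smul]
    abel
  rcases smul_eq_zero.1 h3 with h | h
  · linarith [sub_eq_zero.1 (by linarith [h] : hA.eigenvalues i ^ 2 - (c * hA.eigenvalues i + d) = 0)]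
  · exact absurd h hvne

/-- The energy of the commuting graph of a non-Abelian group of order `p³`:
`E(Γ_G) = 2(p³ - 2p - 1)`. -/
theorem energy_commGraph_of_card_p_cubed
    (p : ℕ) (hp : p.Prime) (G : Type*) [Group G] [Fintype G]
    (hcard : Fintype.card G = p ^ 3) (hna : ∃ x y : G, x * y ≠ y * x) :
    graphEnergy (commGraph G) = 2 * ((p : ℝ) ^ 3 - 2 * p - 1) := by
  classical
  haveI : Fact p.Prime := ⟨hp⟩
  set s : ℝ := (p : ℝ) ^ 2 - p with hs
  have hp2 : (2 : ℝ) ≤ p := by exact_mod_cast hp.two_le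
  have hs2 : 2 ≤ s := by nlinarith
  have hsne : s ≠ 0 := by nlinarith
  have hA := adjMatrix_isHermitian (commGraph G)
  have hsq := adj_matrix_sq hp hcard hna
  have hquad : ∀ i, hA.eigenvalues i ^ 2 = (s - 2) * hA.eigenvalues i + (s - 1) :=
    fun i => eigenvalue_quadratic hA hsq i
  have habs : ∀ i, |hA.eigenvalues i| = ((s - 2) * hA.eigenvalues i + (2 * s - 2)) / s := by
    intro i
    have h := hquad i
    have hfac : (hA.eigenvalues i + 1) * (hA.eigenvalues i - (s - 1)) = 0 := by
      linear_combination h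
    rcases mul_eq_zero.1 hfac with h1 | h1
    · have hl : hA.eigenvalues i = -1 := by linarith
      rw [hl, abs_of_nonpos (by norm_num)]
      field_simp
      ring
    · have hl : hA.eigenvalues i = s - 1 := by linarith
      rw [hl, abs_of_nonneg (by linarith)]
      field_simp
      ring
  have htr : ∑ i, hA.eigenvalues i = 0 := by
    rw [sum_eigenvalues_eq_trace hA]
    simp [Matrix.trace]
  have hn : ((Fintype.card {g : G // g ∉ Subgroup.center G}) : ℝ) = (p : ℝ) ^ 3 - p := by
    rw [card_noncentral hp hcard hna]
    have hle : p ≤ p ^ 3 := Nat.le_self_pow (by norm_num) p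
    push_cast [Nat.cast_sub hle]; ring
  have hgoal : graphEnergy (commGraph G) = ∑ i, |hA.eigenvalues i| := rfl
  rw [hgoal, Finset.sum_congr rfl (fun i _ => habs i)]
  rw [← Finset.sum_div, Finset.sum_add_distrib, ← Finset.mul_sum, htr, Finset.sum_const,
    Finset.card_univ]
  rw [mul_zero, zero_add, nsmul_eq_mul, hn]
  field_simp
  ring
end

section
/- Let G be a finite non-Abelian group that is a 4-centralizer group, i.e., the set {C_G(x) : x ∈ G} of centralizers of elements of G has exactly 4 elements. Then the energy of the commuting graph is E(Γ_G) = 6(|Z(G)| − 1). -/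
open scoped Classical

open scoped Matrix
open Subgroup

section GroupStructure

variable {G : Type*} [Group G]

/-- A group is not the union of two proper subgroups. -/
lemma exists_notMem_two (P Q : Subgroup G) (hP : P ≠ ⊤) (hQ : Q ≠ ⊤) :
    ∃ g : G, g ∉ P ∧ g ∉ Q := by
  by_contra h
  push_neg at h
  obtain ⟨p, hp⟩ : ∃ p : G, p ∉ P := by
    by_contra hh; push_neg at hh
    exact hP ((Subgroup.eq_top_iff' P).2 hh)
  obtain ⟨q, hq⟩ : ∃ q : G, q ∉ Q := by
    by_contra hh; push_neg at hh
    exact hQ ((Subgroup.eq_top_iff' Q).2 hh)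
  have hpQ : p ∈ Q := h p hp
  have hqP : q ∈ P := by by_contra hqP; exact hq (h q hqP)
  by_cases hpq : p * q ∈ P
  · exact hp (by simpa using P.mul_mem hpq (P.inv_mem hqP))
  · have : p * q ∈ Q := h _ hpq
    exact hq (by simpa using Q.mul_mem (Q.inv_mem hpQ) this)

lemma step_lemma {Z P Q R : Subgroup G} {u x : G}
    (hZQ : Z ≤ Q)
    (hcover : ∀ w : G, w ∉ Z → w ∈ P ∨ w ∈ Q ∨ w ∈ R)
    (hPQ : ∀ w : G, w ∈ P → w ∈ Q → w ∈ Z)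
    (huQ : u ∈ Q) (huP : u ∉ P) (huR : u ∉ R)
    (hxP : x ∈ P) (hxZ : x ∉ Z) : x * u ∈ R := by
  have hxQ : x ∉ Q := fun h => hxZ (hPQ x hxP h)
  have hxuZ : x * u ∉ Z := by
    intro h
    exact hxQ (by simpa using Q.mul_mem (hZQ h) (Q.inv_mem huQ))
  rcases hcover _ hxuZ with h | h | h
  · exact absurd (by simpa using P.mul_mem (P.inv_mem hxP) h) huP
  · exact absurd (by simpa using Q.mul_mem h (Q.inv_mem huQ)) hxQ
  · exact h

lemma pair_lemma {Z P Q R : Subgroup G} {u x y : G}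
    (hZQ : Z ≤ Q)
    (hcover : ∀ w : G, w ∉ Z → w ∈ P ∨ w ∈ Q ∨ w ∈ R)
    (hPQ : ∀ w : G, w ∈ P → w ∈ Q → w ∈ Z)
    (hPR : ∀ w : G, w ∈ P → w ∈ R → w ∈ Z)
    (huQ : u ∈ Q) (huP : u ∉ P) (huR : u ∉ R)
    (hxP : x ∈ P) (hxZ : x ∉ Z) (hyP : y ∈ P) (hyZ : y ∉ Z) :
    x * y⁻¹ ∈ Z := by
  have h1 : x * u ∈ R := step_lemma hZQ hcover hPQ huQ huP huR hxP hxZ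
  have h2 : y * u ∈ R := step_lemma hZQ hcover hPQ huQ huP huR hyP hyZ
  have h3 : x * y⁻¹ ∈ R := by
    have := R.mul_mem h1 (R.inv_mem h2)
    simpa [mul_assoc] using this
  exact hPR _ (P.mul_mem hxP (P.inv_mem hyP)) h3

/-- Master structural lemma for 4-centralizer groups. -/
lemma four_centralizer_structure
    (h4 : Nat.card (Set.range fun x : G => Subgroup.centralizer ({x} : Set G)) = 4) :
    ∃ a b : G, a ∉ center G ∧ b ∉ center G ∧ a * b ∉ center G ∧
      a * b⁻¹ ∉ center G ∧
      (∀ x : G, x ∉ center G →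
        x * a⁻¹ ∈ center G ∨ x * b⁻¹ ∈ center G ∨ x * (a * b)⁻¹ ∈ center G) ∧
      (∀ x y : G, x ∉ center G → y ∉ center G → (x * y = y * x ↔ x * y⁻¹ ∈ center G)) := by
  set Z := center G with hZdef
  set f : G → Subgroup G := fun x => Subgroup.centralizer ({x} : Set G) with hfdef
  set S : Set (Subgroup G) := Set.range f with hSdef
  have hftop : ∀ x : G, f x = ⊤ ↔ x ∈ Z := by
    intro x
    simp only [hfdef, Subgroup.centralizer_eq_top_iff_subset, Set.singleton_subset_iff]
    rfl
  have hmemf : ∀ x : G, x ∈ f x := fun x =>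
    Subgroup.mem_centralizer_singleton_iff.2 rfl
  have hZlef : ∀ x : G, Z ≤ f x := fun x => Subgroup.center_le_centralizer _
  have hScard : S.ncard = 4 := by
    rw [← Nat.card_coe_set_eq]; exact h4
  have hSfin : S.Finite := Set.finite_of_ncard_ne_zero (by omega)
  have htopS : ⊤ ∈ S := ⟨1, (hftop 1).2 (one_mem Z)⟩
  have h3 : (S \ {⊤}).ncard = 3 := by
    rw [Set.ncard_diff_singleton_of_mem htopS, hScard]
  obtain ⟨A, B, C, hAB, hAC, hBC, hset⟩ := Set.ncard_eq_three.1 h3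
  -- Membership in {A,B,C} for noncentral elements
  have hmem : ∀ x : G, x ∉ Z → f x = A ∨ f x = B ∨ f x = C := by
    intro x hx
    have h1 : f x ∈ S \ {⊤} := by
      refine ⟨⟨x, rfl⟩, ?_⟩
      simp only [Set.mem_singleton_iff]
      exact fun h => hx ((hftop x).1 h)
    rw [hset] at h1
    simpa using h1
  have hinS : ∀ D ∈ ({A, B, C} : Set (Subgroup G)), D ∈ S ∧ D ≠ ⊤ := by
    intro D hD
    have : D ∈ S \ {⊤} := hset ▸ hD
    exact ⟨this.1, by simpa using this.2⟩
  have hAS := hinS A (by simp)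
  have hBS := hinS B (by simp)
  have hCS := hinS C (by simp)
  have hZle : ∀ D ∈ S, Z ≤ D := by
    rintro D ⟨x, rfl⟩; exact hZlef x
  have hZA : Z ≤ A := hZle A hAS.1
  have hZB : Z ≤ B := hZle B hBS.1
  have hZC : Z ≤ C := hZle C hCS.1
  -- choose elements outside pairs of subgroups
  obtain ⟨a, haB, haC⟩ := exists_notMem_two B C hBS.2 hCS.2
  obtain ⟨b, hbA, hbC⟩ := exists_notMem_two A C hAS.2 hCS.2
  obtain ⟨c, hcA, hcB⟩ := exists_notMem_two A B hAS.2 hBS.2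
  have haZ : a ∉ Z := fun h => haB (hZB h)
  have hbZ : b ∉ Z := fun h => hbA (hZA h)
  have hcZ : c ∉ Z := fun h => hcA (hZA h)
  have hfa : f a = A := by
    rcases hmem a haZ with h | h | h
    · exact h
    · exact absurd (h ▸ hmemf a) haB
    · exact absurd (h ▸ hmemf a) haC
  have hfb : f b = B := by
    rcases hmem b hbZ with h | h | h
    · exact absurd (h ▸ hmemf b) hbA
    · exact h
    · exact absurd (h ▸ hmemf b) hbC
  have hfc : f c = C := by
    rcases hmem c hcZ with h | h | h
    · exact absurd (h ▸ hmemf c) hcA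
    · exact absurd (h ▸ hmemf c) hcB
    · exact h
  have haA : a ∈ A := hfa ▸ hmemf a
  have hbB : b ∈ B := hfb ▸ hmemf b
  have hcC : c ∈ C := hfc ▸ hmemf c
  -- the class lemma: noncentral elements of A have centralizer A
  have hclassA : ∀ x : G, x ∉ Z → x ∈ A → f x = A := by
    intro x hxZ hxA
    have hax : a ∈ f x := by
      have : x ∈ f a := hfa ▸ hxA
      have hc : x * a = a * x := Subgroup.mem_centralizer_singleton_iff.1 this
      exact Subgroup.mem_centralizer_singleton_iff.2 hc.symm
    rcases hmem x hxZ with h | h | h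
    · exact h
    · exact absurd (h ▸ hax) haB
    · exact absurd (h ▸ hax) haC
  have hclassB : ∀ x : G, x ∉ Z → x ∈ B → f x = B := by
    intro x hxZ hxB
    have hbx : b ∈ f x := by
      have : x ∈ f b := hfb ▸ hxB
      have hc : x * b = b * x := Subgroup.mem_centralizer_singleton_iff.1 this
      exact Subgroup.mem_centralizer_singleton_iff.2 hc.symm
    rcases hmem x hxZ with h | h | h
    · exact absurd (h ▸ hbx) hbA
    · exact h
    · exact absurd (h ▸ hbx) hbC
  have hclassC : ∀ x : G, x ∉ Z → x ∈ C → f x = C := by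
    intro x hxZ hxC
    have hcx : c ∈ f x := by
      have : x ∈ f c := hfc ▸ hxC
      have hc : x * c = c * x := Subgroup.mem_centralizer_singleton_iff.1 this
      exact Subgroup.mem_centralizer_singleton_iff.2 hc.symm
    rcases hmem x hxZ with h | h | h
    · exact absurd (h ▸ hcx) hcA
    · exact absurd (h ▸ hcx) hcB
    · exact h
  -- pairwise intersections lie in the center
  have hdAB : ∀ w : G, w ∈ A → w ∈ B → w ∈ Z := by
    intro w h1 h2
    by_contra hw
    exact hAB ((hclassA w hw h1).symm.trans (hclassB w hw h2))
  have hdAC : ∀ w : G, w ∈ A → w ∈ C → w ∈ Z := by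
    intro w h1 h2
    by_contra hw
    exact hAC ((hclassA w hw h1).symm.trans (hclassC w hw h2))
  have hdBC : ∀ w : G, w ∈ B → w ∈ C → w ∈ Z := by
    intro w h1 h2
    by_contra hw
    exact hBC ((hclassB w hw h1).symm.trans (hclassC w hw h2))
  -- cover
  have hcover : ∀ w : G, w ∉ Z → w ∈ A ∨ w ∈ B ∨ w ∈ C := by
    intro w hw
    rcases hmem w hw with h | h | h
    · exact Or.inl (h ▸ hmemf w)
    · exact Or.inr (Or.inl (h ▸ hmemf w))
    · exact Or.inr (Or.inr (h ▸ hmemf w))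
  have hcoverBCA : ∀ w : G, w ∉ Z → w ∈ B ∨ w ∈ C ∨ w ∈ A := fun w hw => by
    rcases hcover w hw with h | h | h <;> tauto
  have hcoverCAB : ∀ w : G, w ∉ Z → w ∈ C ∨ w ∈ A ∨ w ∈ B := fun w hw => by
    rcases hcover w hw with h | h | h <;> tauto
  have hcoverABC' : ∀ w : G, w ∉ Z → w ∈ A ∨ w ∈ B ∨ w ∈ C := hcover
  -- the coset lemma per class
  have hcosA : ∀ x y : G, x ∈ A → x ∉ Z → y ∈ A → y ∉ Z → x * y⁻¹ ∈ Z :=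
    fun x y h1 h2 h3 h4 =>
      pair_lemma hZB hcover hdAB hdAC hbB hbA hbC h1 h2 h3 h4
  have hcosB : ∀ x y : G, x ∈ B → x ∉ Z → y ∈ B → y ∉ Z → x * y⁻¹ ∈ Z := by
    intro x y h1 h2 h3 h4
    exact pair_lemma hZC hcoverBCA (fun w ha hb => hdBC w ha hb)
      (fun w ha hb => hdAB w hb ha) hcC hcB hcA h1 h2 h3 h4
  have hcosC : ∀ x y : G, x ∈ C → x ∉ Z → y ∈ C → y ∉ Z → x * y⁻¹ ∈ Z := by
    intro x y h1 h2 h3 h4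
    exact pair_lemma hZA hcoverCAB (fun w ha hb => hdAC w hb ha)
      (fun w ha hb => hdBC w hb ha) haA haC haB h1 h2 h3 h4
  -- a*b is in C and noncentral
  have habC : a * b ∈ C :=
    step_lemma hZB hcover hdAB hbB hbA hbC haA haZ
  have habZ : a * b ∉ Z := by
    intro h
    exact haB (by simpa using B.mul_mem (hZB h) (B.inv_mem hbB))
  have habZ' : a * b⁻¹ ∉ Z := by
    intro h
    exact haB (by simpa using B.mul_mem (hZB h) hbB)
  -- adjacency characterization
  have hadj : ∀ x y : G, x ∉ Z → y ∉ Z → (x * y = y * x ↔ x * y⁻¹ ∈ Z) := by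
    intro x y hx hy
    constructor
    · intro hcomm
      have hyfx : y ∈ f x := Subgroup.mem_centralizer_singleton_iff.2 hcomm.symm
      rcases hmem x hx with h | h | h
      · exact hcosA x y (h ▸ hmemf x) hx (h ▸ hyfx) hy
      · exact hcosB x y (h ▸ hmemf x) hx (h ▸ hyfx) hy
      · exact hcosC x y (h ▸ hmemf x) hx (h ▸ hyfx) hy
    · intro h
      have hz := (Subgroup.mem_center_iff.1 h)
      have hx' : x = (x * y⁻¹) * y := by group
      calc x * y = ((x * y⁻¹) * y) * y := by rw [← hx']
        _ = y * x := by
            rw [← hz y]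
            group
  refine ⟨a, b, haZ, hbZ, habZ, habZ', ?_, hadj⟩
  intro x hx
  rcases hcover x hx with h | h | h
  · exact Or.inl (hcosA x a h hx haA haZ)
  · exact Or.inr (Or.inl (hcosB x b h hx hbB hbZ))
  · exact Or.inr (Or.inr (hcosC x (a * b) h hx habC habZ))

end GroupStructure

lemma sum_eigenvalues_eq_trace_s18 {V : Type*} [Fintype V] [DecidableEq V]
    {M : Matrix V V ℝ} (hM : M.IsHermitian) :
    ∑ i, hM.eigenvalues i = M.trace := by
  conv_rhs => rw [hM.spectral_theorem, Unitary.conjStarAlgAut_apply]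
  rw [Matrix.trace_mul_comm, ← mul_assoc]
  rw [show star (hM.eigenvectorUnitary : Matrix V V ℝ) * (hM.eigenvectorUnitary : Matrix V V ℝ)
      = 1 from Unitary.coe_star_mul_self _]
  simp [Matrix.trace_diagonal]

lemma eig_quadratic {V : Type*} [Fintype V] [DecidableEq V]
    {M : Matrix V V ℝ} (hM : M.IsHermitian) (c1 c0 : ℝ)
    (hid : M * M = c1 • M + c0 • 1) (i : V) :
    hM.eigenvalues i * hM.eigenvalues i = c1 * hM.eigenvalues i + c0 := by
  set μ := hM.eigenvalues i with hμ
  have hv := hM.mulVec_eigenvectorBasis i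
  have hv0 : ⇑(hM.eigenvectorBasis i) ≠ 0 := by
    have := hM.eigenvectorBasis.orthonormal.ne_zero i
    intro h
    apply this
    ext j
    exact congrFun h j
  have h2 : (M * M) *ᵥ (⇑(hM.eigenvectorBasis i)) = (μ * μ) • ⇑(hM.eigenvectorBasis i) := by
    rw [← Matrix.mulVec_mulVec, hv, Matrix.mulVec_smul, hv, smul_smul]
  rw [hid] at h2
  rw [Matrix.add_mulVec, Matrix.smul_mulVec, Matrix.smul_mulVec, Matrix.one_mulVec,
    hv, smul_smul] at h2
  have h3 : (μ * μ - (c1 * μ + c0)) • ⇑(hM.eigenvectorBasis i) = 0 := by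
    rw [sub_smul, ← h2, add_smul]
    abel
  rcases smul_eq_zero.1 h3 with h | h
  · linarith [sub_eq_zero.1 (by linarith [h] : μ * μ - (c1 * μ + c0) = 0)]
  · exact absurd h hv0

/-- Final numerical computation of the energy. -/
lemma energy_formula {V : Type*} [Fintype V] (Γ : SimpleGraph V) (n : ℕ) (hn : 1 ≤ n)
    (hN : Fintype.card V = 3 * n)
    (hid : Γ.adjMatrix ℝ * Γ.adjMatrix ℝ
      = ((n : ℝ) - 2) • Γ.adjMatrix ℝ + ((n : ℝ) - 1) • 1) :
    graphEnergy Γ = 6 * ((n : ℝ) - 1) := by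
  have hM := adjMatrix_isHermitian Γ
  set μ := (adjMatrix_isHermitian Γ).eigenvalues with hμdef
  have hquad : ∀ i, μ i = (n : ℝ) - 1 ∨ μ i = -1 := by
    intro i
    have h := eig_quadratic (adjMatrix_isHermitian Γ) _ _ hid i
    have h2 : (μ i - ((n : ℝ) - 1)) * (μ i + 1) = 0 := by
      linear_combination h
    rcases mul_eq_zero.1 h2 with h3 | h3
    · exact Or.inl (sub_eq_zero.1 h3)
    · exact Or.inr (by linarith)
  have htrace : ∑ i, μ i = 0 := by
    rw [hμdef, sum_eigenvalues_eq_trace_s18]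
    simp
  set s : Finset V := Finset.univ.filter (fun i => μ i = (n : ℝ) - 1) with hsdef
  set k := s.card with hkdef
  have hks : ∀ i ∈ s, μ i = (n : ℝ) - 1 := by
    intro i hi; exact (Finset.mem_filter.1 hi).2
  have hksc : ∀ i ∈ sᶜ, μ i = -1 := by
    intro i hi
    rcases hquad i with h | h
    · exact absurd (Finset.mem_filter.2 ⟨Finset.mem_univ i, h⟩) (Finset.mem_compl.1 hi)
    · exact h
  have hcc : (sᶜ).card = 3 * n - k := by
    rw [Finset.card_compl, hN, hkdef]
  have hkle : k ≤ 3 * n := hN ▸ Finset.card_le_univ s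
  have hcast : ((3 * n - k : ℕ) : ℝ) = 3 * (n : ℝ) - (k : ℝ) := by
    push_cast [Nat.cast_sub hkle]; ring
  have hsum : (0 : ℝ) = k * ((n : ℝ) - 1) + (3 * n - k) * (-1) := by
    rw [← htrace, ← Finset.sum_add_sum_compl s μ]
    rw [Finset.sum_congr rfl hks, Finset.sum_congr rfl hksc]
    rw [Finset.sum_const, Finset.sum_const, hcc, nsmul_eq_mul, nsmul_eq_mul, hcast]
    try ring
  have hn1 : (1 : ℝ) ≤ (n : ℝ) := by exact_mod_cast hn
  have hk3 : (k : ℝ) = 3 := by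
    have hne : (n : ℝ) ≠ 0 := by linarith
    have : (k : ℝ) * (n : ℝ) = 3 * (n : ℝ) := by linarith
    exact mul_right_cancel₀ hne this
  have henergy : graphEnergy Γ = k * ((n : ℝ) - 1) + (3 * n - k) := by
    rw [graphEnergy]
    rw [← Finset.sum_add_sum_compl s (fun i => |μ i|)]
    have e1 : ∀ i ∈ s, |μ i| = (n : ℝ) - 1 := by
      intro i hi; rw [hks i hi]; exact abs_of_nonneg (by linarith)
    have e2 : ∀ i ∈ sᶜ, |μ i| = 1 := by
      intro i hi; rw [hksc i hi]; norm_num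
    rw [Finset.sum_congr rfl e1, Finset.sum_congr rfl e2]
    rw [Finset.sum_const, Finset.sum_const, hcc, nsmul_eq_mul, nsmul_eq_mul, hcast]
    ring
  rw [henergy, hk3]
  have : (3:ℝ) * ((n:ℝ) - 1) = 3*n - 3 := by ring
  linarith [hsum, hk3]

section Assembly

variable {G : Type*} [Group G] [Fintype G]

local notation "Z" => Subgroup.center G
local notation "V'" => {g : G // g ∉ Subgroup.center G}

lemma card_fiber (g : G) (hg : g ∉ Z) :
    (Finset.univ.filter fun w : V' => (w : G) * g⁻¹ ∈ Z).card = Fintype.card Z := by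
  rw [← Fintype.card_subtype]
  refine (Fintype.card_congr ?_).symm
  refine
    { toFun := fun z => ⟨⟨(z : G) * g, ?_⟩, ?_⟩
      invFun := fun w => ⟨(w.1 : G) * g⁻¹, w.2⟩
      left_inv := ?_
      right_inv := ?_ }
  · intro h
    exact hg (by simpa using mul_mem (inv_mem z.2) h)
  · simpa using z.2
  · intro z; ext; simp
  · intro w; ext; simp

lemma hAdj_iff (hadj : ∀ x y : G, x ∉ Z → y ∉ Z → (x * y = y * x ↔ x * y⁻¹ ∈ Z))
    (x y : V') : (commGraph G).Adj x y ↔ x ≠ y ∧ (x : G) * (y : G)⁻¹ ∈ Z := by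
  constructor
  · rintro ⟨h1, h2⟩; exact ⟨h1, (hadj x y x.2 y.2).1 h2⟩
  · rintro ⟨h1, h2⟩; exact ⟨h1, (hadj x y x.2 y.2).2 h2⟩

lemma matrix_identity (hadj : ∀ x y : G, x ∉ Z → y ∉ Z → (x * y = y * x ↔ x * y⁻¹ ∈ Z)) :
    (commGraph G).adjMatrix ℝ * (commGraph G).adjMatrix ℝ
      = ((Fintype.card Z : ℝ) - 2) • (commGraph G).adjMatrix ℝ
        + ((Fintype.card Z : ℝ) - 1) • 1 := by
  set n := Fintype.card Z with hn
  have hn1 : 1 ≤ n := Fintype.card_pos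
  ext x y
  rw [Matrix.mul_apply]
  have hterm : ∀ w : V', (commGraph G).adjMatrix ℝ x w * (commGraph G).adjMatrix ℝ w y
      = if (commGraph G).Adj x w ∧ (commGraph G).Adj w y then (1 : ℝ) else 0 := by
    intro w
    by_cases h1 : (commGraph G).Adj x w <;> by_cases h2 : (commGraph G).Adj w y <;>
      simp [h1, h2]
  rw [Finset.sum_congr rfl fun w _ => hterm w, Finset.sum_boole]
  by_cases hxy : (x : G) * (y : G)⁻¹ ∈ Z
  · by_cases hxe : x = y
    · subst hxe
      have hset : (Finset.univ.filter
            fun w : V' => (commGraph G).Adj x w ∧ (commGraph G).Adj w x)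
          = (Finset.univ.filter fun w : V' => (w : G) * (x : G)⁻¹ ∈ Z).erase x := by
        ext w
        simp only [Finset.mem_filter, Finset.mem_univ, true_and, Finset.mem_erase]
        constructor
        · rintro ⟨h1, h2⟩
          exact (hAdj_iff hadj w x).1 h2
        · rintro ⟨hne, hm⟩
          refine ⟨(hAdj_iff hadj x w).2 ⟨Ne.symm hne, ?_⟩, (hAdj_iff hadj w x).2 ⟨hne, hm⟩⟩
          simpa [mul_inv_rev, mul_assoc] using inv_mem hm
      have hxmem : x ∈ Finset.univ.filter fun w : V' => (w : G) * (x : G)⁻¹ ∈ Z :=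
        Finset.mem_filter.2 ⟨Finset.mem_univ x, by simpa using (Subgroup.center G).one_mem⟩
      rw [hset, Finset.card_erase_of_mem hxmem, card_fiber (x : G) x.2]
      have hM0 : (commGraph G).adjMatrix ℝ x x = 0 := by simp
      simp only [Matrix.add_apply, Matrix.smul_apply, Matrix.one_apply_eq, hM0,
        smul_eq_mul, mul_zero, mul_one, zero_add]
      rw [← hn, Nat.cast_sub hn1]
      norm_num
    · have hyx : (y : G) * (x : G)⁻¹ ∈ Z := by
        simpa [mul_inv_rev, mul_assoc] using inv_mem hxy
      have hset : (Finset.univ.filter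
            fun w : V' => (commGraph G).Adj x w ∧ (commGraph G).Adj w y)
          = ((Finset.univ.filter fun w : V' => (w : G) * (x : G)⁻¹ ∈ Z).erase x).erase y := by
        ext w
        simp only [Finset.mem_filter, Finset.mem_univ, true_and, Finset.mem_erase]
        constructor
        · rintro ⟨h1, h2⟩
          rcases (hAdj_iff hadj x w).1 h1 with ⟨hne1, hm1⟩
          rcases (hAdj_iff hadj w y).1 h2 with ⟨hne2, hm2⟩
          refine ⟨hne2, Ne.symm hne1, ?_⟩
          simpa [mul_inv_rev, mul_assoc] using inv_mem hm1
        · rintro ⟨hne2, hne1, hm⟩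
          refine ⟨(hAdj_iff hadj x w).2 ⟨Ne.symm hne1, ?_⟩,
            (hAdj_iff hadj w y).2 ⟨hne2, ?_⟩⟩
          · simpa [mul_inv_rev, mul_assoc] using inv_mem hm
          · simpa [mul_assoc] using mul_mem hm hxy
      have hxmem : x ∈ Finset.univ.filter fun w : V' => (w : G) * (x : G)⁻¹ ∈ Z :=
        Finset.mem_filter.2 ⟨Finset.mem_univ x, by simpa using (Subgroup.center G).one_mem⟩
      have hymem : y ∈ (Finset.univ.filter
          fun w : V' => (w : G) * (x : G)⁻¹ ∈ Z).erase x :=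
        Finset.mem_erase.2 ⟨fun h => hxe h.symm, Finset.mem_filter.2 ⟨Finset.mem_univ y, hyx⟩⟩
      have hn2 : 2 ≤ n := by
        have h1 : 0 < ((Finset.univ.filter
            fun w : V' => (w : G) * (x : G)⁻¹ ∈ Z).erase x).card :=
          Finset.card_pos.2 ⟨y, hymem⟩
        rw [Finset.card_erase_of_mem hxmem, card_fiber (x : G) x.2] at h1
        omega
      rw [hset, Finset.card_erase_of_mem hymem, Finset.card_erase_of_mem hxmem,
        card_fiber (x : G) x.2]
      have hM1 : (commGraph G).adjMatrix ℝ x y = 1 := by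
        rw [SimpleGraph.adjMatrix_apply, if_pos ((hAdj_iff hadj x y).2 ⟨hxe, hxy⟩)]
      simp only [Matrix.add_apply, Matrix.smul_apply, Matrix.one_apply_ne hxe, hM1,
        smul_eq_mul, mul_zero, mul_one, add_zero]
      rw [← hn]
      have hcast : ((n - 1 - 1 : ℕ) : ℝ) = (n : ℝ) - 2 := by
        have h' : n - 1 - 1 = n - 2 := by omega
        rw [h', Nat.cast_sub hn2]; norm_num
      rw [hcast]
  · have hset : (Finset.univ.filter
        fun w : V' => (commGraph G).Adj x w ∧ (commGraph G).Adj w y) = ∅ := by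
      ext w
      simp only [Finset.mem_filter, Finset.mem_univ, true_and, Finset.notMem_empty,
        iff_false]
      rintro ⟨h1, h2⟩
      rcases (hAdj_iff hadj x w).1 h1 with ⟨_, hm1⟩
      rcases (hAdj_iff hadj w y).1 h2 with ⟨_, hm2⟩
      exact hxy (by simpa [mul_assoc] using mul_mem hm1 hm2)
    have hxe : x ≠ y := by
      intro h; subst h; exact hxy (by simpa using (Subgroup.center G).one_mem)
    have hnAdj : ¬ (commGraph G).Adj x y := fun h => hxy ((hAdj_iff hadj x y).1 h).2
    rw [hset]
    simp [Matrix.add_apply, Matrix.smul_apply, Matrix.one_apply_ne hxe, hnAdj]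

lemma card_vertices (a b : G) (ha : a ∉ Z) (hb : b ∉ Z) (hab : a * b ∉ Z)
    (hab' : a * b⁻¹ ∉ Z)
    (hcov : ∀ x : G, x ∉ Z → x * a⁻¹ ∈ Z ∨ x * b⁻¹ ∈ Z ∨ x * (a * b)⁻¹ ∈ Z) :
    Fintype.card V' = 3 * Fintype.card Z := by
  set Fa := Finset.univ.filter fun w : V' => (w : G) * a⁻¹ ∈ Z with hFa
  set Fb := Finset.univ.filter fun w : V' => (w : G) * b⁻¹ ∈ Z with hFb
  set Fab := Finset.univ.filter fun w : V' => (w : G) * (a * b)⁻¹ ∈ Z with hFab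
  have hwa : ∀ w : V', w ∈ Fa → (w : G) * a⁻¹ ∈ Z := fun w hw => (Finset.mem_filter.1 hw).2
  have hwb : ∀ w : V', w ∈ Fb → (w : G) * b⁻¹ ∈ Z := fun w hw => (Finset.mem_filter.1 hw).2
  have hwab : ∀ w : V', w ∈ Fab → (w : G) * (a * b)⁻¹ ∈ Z :=
    fun w hw => (Finset.mem_filter.1 hw).2
  have hdisj1 : Disjoint Fa Fb := by
    rw [Finset.disjoint_left]
    intro w hwa' hwb'
    have := mul_mem (inv_mem (hwa w hwa')) (hwb w hwb')
    exact hab' (by simpa [mul_inv_rev, mul_assoc] using this)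
  have hdisj2 : Disjoint (Fa ∪ Fb) Fab := by
    rw [Finset.disjoint_left]
    intro w hw hwab'
    rcases Finset.mem_union.1 hw with h | h
    · have hz : a * (b⁻¹ * a⁻¹) ∈ Z := by
        simpa [mul_inv_rev, mul_assoc] using
          mul_mem (inv_mem (hwa w h)) (hwab w hwab')
      have hcomm := Subgroup.mem_center_iff.1 hz a
      -- a * (a * (b⁻¹ * a⁻¹)) = (a * (b⁻¹ * a⁻¹)) * a
      have hbz : b⁻¹ ∈ Z := by
        have : a * (b⁻¹ * a⁻¹) = b⁻¹ := by
          have h2 : a * (a * (b⁻¹ * a⁻¹)) = a * b⁻¹ := by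
            rw [hcomm]; group
          exact mul_left_cancel h2
        exact this ▸ hz
      exact hb (by simpa using inv_mem hbz)
    · have hz : a⁻¹ ∈ Z := by
        simpa [mul_inv_rev, mul_assoc] using
          mul_mem (inv_mem (hwb w h)) (hwab w hwab')
      exact ha (by simpa using inv_mem hz)
  have huniv : (Finset.univ : Finset V') = Fa ∪ Fb ∪ Fab := by
    ext w
    simp only [Finset.mem_univ, true_iff, Finset.mem_union, hFa, hFb, hFab,
      Finset.mem_filter]
    rcases hcov w w.2 with h | h | h <;> tauto
  have : Fintype.card V' = (Fa ∪ Fb ∪ Fab).card := by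
    rw [← huniv]; rfl
  rw [this, Finset.card_union_of_disjoint hdisj2, Finset.card_union_of_disjoint hdisj1,
    card_fiber a ha, card_fiber b hb, card_fiber (a * b) hab]
  ring

end Assembly

/-- If `G` is a finite non-Abelian `4`-centralizer group (it has exactly `4` distinct
centralizers of elements), then `E(Γ_G) = 6(|Z(G)| - 1)`. -/
theorem energy_commGraph_of_four_centralizer
    (G : Type*) [Group G] [Fintype G] (hna : ∃ x y : G, x * y ≠ y * x)
    (h4 : Nat.card (Set.range fun x : G => Subgroup.centralizer ({x} : Set G)) = 4) :
    graphEnergy (commGraph G) = 6 * ((Nat.card (Subgroup.center G) : ℝ) - 1) := by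
  obtain ⟨a, b, ha, hb, hab, hab', hcov, hadj⟩ := four_centralizer_structure h4
  have hn1 : 1 ≤ Fintype.card (Subgroup.center G) := Fintype.card_pos
  have hid := matrix_identity hadj
  have hcard := card_vertices a b ha hb hab hab' hcov
  have h := energy_formula (commGraph G) (Fintype.card (Subgroup.center G)) hn1 hcard
    (by
      convert hid using 3
      ext i j
      by_cases hij : i = j <;> simp [Matrix.one_apply, hij])
  rw [h, Nat.card_eq_fintype_card]
end

section
/- Let G be a finite non-Abelian group that is a 5-centralizer group, i.e., the set {C_G(x) : x ∈ G} of centralizers of elements of G has exactly 5 elements. Then the energy of the commuting graph satisfies E(Γ_G) = 8(2|Z(G)| − 1) or E(Γ_G) = 10|Z(G)| − 8. -/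
open scoped Classical

section Energy


open Matrix
variable {V ι : Type*} [Fintype V] [Fintype ι]

lemma energy_blowup (Γ : SimpleGraph V) (f : V → ι) (hsurj : Function.Surjective f)
    (hadj : ∀ u v : V, Γ.Adj u v ↔ u ≠ v ∧ f u = f v) :
    graphEnergy Γ = 2 * ((Fintype.card V : ℝ) - Fintype.card ι) := by
  classical
  set A : Matrix V V ℝ := Γ.adjMatrix ℝ with hAdef
  have hA : A.IsHermitian := adjMatrix_isHermitian Γ
  set μ : V → ℝ := hA.eigenvalues with hμdef
  set B : Matrix V V ℝ := A + 1 with hBdef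
  have hBapp : ∀ u v, B u v = if f u = f v then 1 else 0 := by
    intro u v
    by_cases h : u = v
    · subst h; simp [hBdef, hAdef, Matrix.add_apply, Matrix.one_apply]
    · simp only [hBdef, hAdef, Matrix.add_apply, Matrix.one_apply, if_neg h,
        SimpleGraph.adjMatrix_apply, add_zero, hadj]
      by_cases hf : f u = f v <;> simp [hf, h]
  -- B = M * Mᵀ
  set M : Matrix V ι ℝ := Matrix.of (fun v i => if f v = i then 1 else 0) with hMdef
  have hBM : B = M * Mᵀ := by
    ext u v
    rw [hBapp]
    simp only [Matrix.mul_apply, Matrix.transpose_apply, hMdef, Matrix.of_apply]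
    rw [Finset.sum_eq_single (f u)]
    · by_cases h : f u = f v <;> simp [h, eq_comm]
    · intro i _ hi; simp [Ne.symm hi]
    · simp
  -- rank of B
  have hMTM : Mᵀ * M = Matrix.diagonal (fun i => (Fintype.card {v // f v = i} : ℝ)) := by
    ext i j
    simp only [Matrix.mul_apply, Matrix.transpose_apply, hMdef, Matrix.of_apply,
      Matrix.diagonal_apply]
    by_cases h : i = j
    · subst h
      simp only [if_pos rfl]
      rw [Fintype.card_subtype, Finset.card_eq_sum_ones]
      push_cast
      rw [Finset.sum_filter]
      exact Finset.sum_congr rfl (by intro v _; by_cases hv : f v = i <;> simp [hv])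
    · rw [if_neg h]
      apply Finset.sum_eq_zero
      intro v _
      by_cases hv : f v = i
      · simp [hv, h]
      · simp [hv]
  have hrankB : B.rank = Fintype.card ι := by
    have h1 : B.rank = M.rank := by rw [hBM, Matrix.rank_self_mul_transpose]
    have h2 : M.rank ≤ Fintype.card ι := Matrix.rank_le_card_width M
    have h3 : (Mᵀ * M).rank = Fintype.card ι := by
      rw [hMTM, Matrix.rank_diagonal]
      apply Fintype.card_congr
      apply Equiv.subtypeUnivEquiv
      intro i
      have : 0 < Fintype.card {v // f v = i} := Fintype.card_pos_iff.mpr ⟨⟨_, (hsurj i).choose_spec⟩⟩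
      positivity
    have h4 : (Mᵀ * M).rank ≤ M.rank := Matrix.rank_mul_le_right _ _
    omega
  -- B * B = N * B
  set N : Matrix V V ℝ := Matrix.diagonal (fun v => (Fintype.card {w // f w = f v} : ℝ)) with hNdef
  have hNB : B * B = N * B := by
    ext u v
    simp only [Matrix.mul_apply]
    by_cases h : f u = f v
    · have h1 : ∀ w, B u w * B w v = if f w = f u then 1 else 0 := by
        intro w
        rw [hBapp, hBapp]
        by_cases hw : f w = f u
        · rw [if_pos hw.symm, if_pos (hw.trans h), if_pos hw, one_mul]
        · rw [if_neg (fun hh => hw hh.symm), if_neg hw, zero_mul]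
      have hdiag : ∀ w, N u w * B w v = if w = u then (Fintype.card {x // f x = f u} : ℝ) else 0 := by
        intro w
        simp only [hNdef, Matrix.diagonal_apply]
        rw [hBapp w v]
        by_cases hw : u = w
        · subst hw
          simp only [if_pos rfl]
          rw [if_pos h, mul_one]
        · rw [if_neg hw, zero_mul, if_neg (fun hh : w = u => hw hh.symm)]
      calc (∑ w, B u w * B w v) = ∑ w, (if f w = f u then (1:ℝ) else 0) := by
            exact Finset.sum_congr rfl (fun w _ => h1 w)
        _ = (Fintype.card {w // f w = f u} : ℝ) := by
            rw [Fintype.card_subtype, Finset.card_eq_sum_ones]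
            push_cast
            rw [Finset.sum_filter]
        _ = ∑ w, N u w * B w v := by
            rw [Finset.sum_congr rfl (fun w _ => hdiag w)]
            simp
    · have h1 : ∀ w, B u w * B w v = 0 := by
        intro w
        rw [hBapp, hBapp]
        split_ifs <;> simp_all
      have h2 : ∀ w, N u w * B w v = 0 := by
        intro w
        simp only [hNdef, Matrix.diagonal_apply]
        rw [hBapp w v]
        by_cases hw : u = w
        · subst hw
          rw [if_neg h, mul_zero]
        · rw [if_neg hw, zero_mul]
      rw [Finset.sum_eq_zero (fun w _ => h1 w), Finset.sum_eq_zero (fun w _ => h2 w)]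
  -- spectral decomposition
  set U : Matrix V V ℝ := (hA.eigenvectorUnitary : Matrix V V ℝ) with hUdef
  have hUU : U * star U = 1 := Matrix.mem_unitaryGroup_iff.mp (hA.eigenvectorUnitary).2
  have hU'U : star U * U = 1 := Matrix.mem_unitaryGroup_iff'.mp (hA.eigenvectorUnitary).2
  have hsp : A = U * Matrix.diagonal μ * star U := by
    have h := hA.spectral_theorem
    rwa [RCLike.ofReal_real_eq_id, Function.id_comp] at h
  -- trace is the sum of eigenvalues
  have htrA : A.trace = 0 := SimpleGraph.trace_adjMatrix ℝ Γ
  have htr : ∑ i, μ i = 0 := by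
    have h2 : A.trace = ∑ i, μ i := by
      rw [hsp, Matrix.trace_mul_cycle, hU'U, Matrix.one_mul, Matrix.trace_diagonal]
    rw [← h2, htrA]
  -- B in diagonal form
  have hBsp : B = U * Matrix.diagonal (fun i => μ i + 1) * star U := by
    have hd : Matrix.diagonal (fun i => μ i + 1) = Matrix.diagonal μ + 1 := by
      rw [← Matrix.diagonal_one, Matrix.diagonal_add]
    rw [hBdef, hsp, hd, Matrix.mul_add, Matrix.add_mul, Matrix.mul_one, hUU]
  -- rank of B equals the number of eigenvalues different from -1
  have hdetU : IsUnit U.det := Matrix.isUnit_det_of_right_inverse hUU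
  have hdetU' : IsUnit (star U).det := Matrix.isUnit_det_of_left_inverse hUU
  have hrankd : B.rank = (Finset.univ.filter (fun i : V => ¬(μ i = -1))).card := by
    rw [hBsp, Matrix.rank_mul_eq_left_of_isUnit_det _ _ hdetU',
      Matrix.rank_mul_eq_right_of_isUnit_det _ _ hdetU, Matrix.rank_diagonal,
      Fintype.card_subtype]
    congr 1
    apply Finset.filter_congr
    intro i _
    constructor
    · intro hh hc; exact hh (by rw [hc]; ring)
    · intro hh hc; exact hh (by linarith)
  have hcount : (Finset.univ.filter (fun i : V => ¬(μ i = -1))).card = Fintype.card ι := by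
    rw [← hrankd, hrankB]
  -- eigenvalues different from -1 are nonnegative
  have hpos : ∀ i, ¬(μ i = -1) → 0 ≤ μ i := by
    intro i hi
    have hv := hA.mulVec_eigenvectorBasis i
    set v : V → ℝ := ⇑(hA.eigenvectorBasis i) with hvdef
    have hvne : v ≠ 0 := by
      intro hc
      exact hA.eigenvectorBasis.orthonormal.ne_zero i (by ext x; exact congrFun hc x)
    have hne1 : μ i + 1 ≠ 0 := fun hc => hi (by linarith)
    have hBv : B *ᵥ v = (μ i + 1) • v := by
      rw [hBdef, Matrix.add_mulVec, Matrix.one_mulVec, hv, add_smul, one_smul]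
    have hB2 : B *ᵥ (B *ᵥ v) = (μ i + 1) • ((μ i + 1) • v) := by
      rw [hBv, Matrix.mulVec_smul, hBv]
    have hB2' : B *ᵥ (B *ᵥ v) = (μ i + 1) • (N *ᵥ v) := by
      rw [Matrix.mulVec_mulVec, hNB, ← Matrix.mulVec_mulVec, hBv, Matrix.mulVec_smul]
    have hNv : N *ᵥ v = (μ i + 1) • v :=
      smul_right_injective (V → ℝ) hne1 (hB2'.symm.trans hB2)
    obtain ⟨u, hu⟩ := Function.ne_iff.mp hvne
    have hcoord := congrFun hNv u
    rw [hNdef, Matrix.mulVec_diagonal] at hcoord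
    have hval : (Fintype.card {w // f w = f u} : ℝ) = μ i + 1 := by
      have : (Fintype.card {w // f w = f u} : ℝ) * v u = (μ i + 1) * v u := by
        simpa [Pi.smul_apply, smul_eq_mul] using hcoord
      exact mul_right_cancel₀ hu this
    have hge : 1 ≤ (Fintype.card {w // f w = f u} : ℝ) := by
      have : 0 < Fintype.card {w // f w = f u} := Fintype.card_pos_iff.mpr ⟨⟨u, rfl⟩⟩
      exact_mod_cast this
    linarith [hval ▸ hge]
  -- final computation
  have henergy : graphEnergy Γ = ∑ i, |μ i| := rfl
  rw [henergy]
  rw [← Finset.sum_filter_add_sum_filter_not Finset.univ (fun i : V => μ i = -1)]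
  have hs1 : ∑ i ∈ Finset.univ.filter (fun i : V => μ i = -1), |μ i|
      = (Finset.univ.filter (fun i : V => μ i = -1)).card := by
    rw [Finset.card_eq_sum_ones]
    push_cast
    apply Finset.sum_congr rfl
    intro i hi
    rw [(Finset.mem_filter.mp hi).2]
    norm_num
  have hs2 : ∑ i ∈ Finset.univ.filter (fun i : V => ¬(μ i = -1)), |μ i|
      = ∑ i ∈ Finset.univ.filter (fun i : V => ¬(μ i = -1)), μ i := by
    apply Finset.sum_congr rfl
    intro i hi
    exact abs_of_nonneg (hpos i (Finset.mem_filter.mp hi).2)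
  have hs3 : ∑ i ∈ Finset.univ.filter (fun i : V => μ i = -1), μ i
      = -((Finset.univ.filter (fun i : V => μ i = -1)).card : ℝ) := by
    rw [Finset.sum_congr rfl (fun i hi => (Finset.mem_filter.mp hi).2)]
    simp
  have hsplit : ∑ i ∈ Finset.univ.filter (fun i : V => μ i = -1), μ i
      + ∑ i ∈ Finset.univ.filter (fun i : V => ¬(μ i = -1)), μ i = 0 := by
    rw [Finset.sum_filter_add_sum_filter_not]
    exact htr
  have hcards : (Finset.univ.filter (fun i : V => μ i = -1)).card
      + (Finset.univ.filter (fun i : V => ¬(μ i = -1))).card = Fintype.card V := by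
    rw [Finset.card_filter_add_card_filter_not]
    rfl
  rw [hs1, hs2]
  have : ∑ i ∈ Finset.univ.filter (fun i : V => ¬(μ i = -1)), μ i
      = ((Finset.univ.filter (fun i : V => μ i = -1)).card : ℝ) := by
    rw [hs3] at hsplit; linarith
  rw [this]
  have hc1 : ((Finset.univ.filter (fun i : V => μ i = -1)).card : ℝ)
      = (Fintype.card V : ℝ) - (Fintype.card ι : ℝ) := by
    rw [← hcards, hcount]
    push_cast
    ring
  rw [hc1]
  ring

end Energy


section GroupCore

variable {G : Type*} [Group G] [Fintype G]

lemma cg_self_mem (x : G) : x ∈ Subgroup.centralizer ({x} : Set G) :=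
  Subgroup.mem_centralizer_singleton_iff.mpr rfl

lemma cg_eq_top_iff {x : G} :
    Subgroup.centralizer ({x} : Set G) = ⊤ ↔ x ∈ Subgroup.center G := by
  rw [Subgroup.centralizer_eq_top_iff_subset, Set.singleton_subset_iff, SetLike.mem_coe]

lemma edge_lemma {a b a' b' : G} (hab : a * b = b * a)
    (ha : Subgroup.centralizer ({a'} : Set G) = Subgroup.centralizer ({a} : Set G))
    (hb : Subgroup.centralizer ({b'} : Set G) = Subgroup.centralizer ({b} : Set G)) :
    a' * b' = b' * a' := by
  have h1 : b ∈ Subgroup.centralizer ({a'} : Set G) := by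
    rw [ha]; exact Subgroup.mem_centralizer_singleton_iff.mpr hab.symm
  have h2 : b * a' = a' * b := Subgroup.mem_centralizer_singleton_iff.mp h1
  have h3 : a' ∈ Subgroup.centralizer ({b'} : Set G) := by
    rw [hb]; exact Subgroup.mem_centralizer_singleton_iff.mpr h2.symm
  exact Subgroup.mem_centralizer_singleton_iff.mp h3

lemma keyAux (T' : Finset (Subgroup G)) (hT4 : T'.card = 4)
    (hmem : ∀ g : G, g ∉ Subgroup.center G → Subgroup.centralizer ({g} : Set G) ∈ T')
    {x y w : G} (hx : x ∉ Subgroup.center G) (hy : y ∉ Subgroup.center G)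
    (hxy : x * y = y * x)
    (hne : Subgroup.centralizer ({x} : Set G) ≠ Subgroup.centralizer ({y} : Set G))
    (hw1 : w ∈ Subgroup.centralizer ({x} : Set G))
    (hw2 : w ∉ Subgroup.centralizer ({y} : Set G)) : False := by
  have hwZ : w ∉ Subgroup.center G := fun hc => hw2 (Subgroup.center_le_centralizer _ hc)
  have hxw : x * w = w * x := (Subgroup.mem_centralizer_singleton_iff.mp hw1).symm
  have hwy : ¬ (w * y = y * w) := fun hc => hw2 (Subgroup.mem_centralizer_singleton_iff.mpr hc)
  -- the product t = y * w
  have htZ : y * w ∉ Subgroup.center G := by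
    intro hc
    have h2 : y * (y * w) = (y * w) * y := (Subgroup.mem_center_iff.mp hc y)
    have h3 : y * (y * w) = y * (w * y) := by rw [h2, mul_assoc]
    exact hwy (mul_left_cancel h3).symm
  have hxt : x * (y * w) = (y * w) * x := by
    calc x * (y * w) = (x * y) * w := (mul_assoc _ _ _).symm
      _ = (y * x) * w := by rw [hxy]
      _ = y * (x * w) := mul_assoc _ _ _
      _ = y * (w * x) := by rw [hxw]
      _ = (y * w) * x := (mul_assoc _ _ _).symm
  -- no element commuting with y*w the wrong way
  have hyt : ¬ (y * (y * w) = (y * w) * y) := by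
    intro h2
    have h3 : y * (y * w) = y * (w * y) := by rw [h2, mul_assoc]
    exact hwy (mul_left_cancel h3).symm
  have hwt : ¬ (w * (y * w) = (y * w) * w) := by
    intro h2
    have h3 : (w * y) * w = (y * w) * w := by rw [mul_assoc]; exact h2
    exact hwy (mul_right_cancel h3)
  -- distinctness of the four centralizers
  set Cx := Subgroup.centralizer ({x} : Set G) with hCx
  set Cy := Subgroup.centralizer ({y} : Set G) with hCy
  set Cw := Subgroup.centralizer ({w} : Set G) with hCw
  set Ct := Subgroup.centralizer ({y * w} : Set G) with hCt
  have hwx_ne : Cw ≠ Cx := by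
    intro hc
    exact hwy (edge_lemma hxy hc rfl)
  have hwy_ne : Cw ≠ Cy := by
    intro hc
    exact hw2 (hc ▸ cg_self_mem w)
  have htx_ne : Ct ≠ Cx := by
    intro hc
    have hy_in : y ∈ Cx := Subgroup.mem_centralizer_singleton_iff.mpr hxy.symm
    rw [← hc] at hy_in
    exact hyt (Subgroup.mem_centralizer_singleton_iff.mp hy_in)
  have hty_ne : Ct ≠ Cy := by
    intro hc
    have hy_in : y ∈ Ct := hc ▸ cg_self_mem y
    exact hyt (Subgroup.mem_centralizer_singleton_iff.mp hy_in)
  have htw_ne : Ct ≠ Cw := by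
    intro hc
    have hw_in : w ∈ Ct := hc ▸ cg_self_mem w
    exact hwt (Subgroup.mem_centralizer_singleton_iff.mp hw_in)
  -- the four centralizers are all of T'
  set F : Finset (Subgroup G) := {Cx, Cy, Cw, Ct} with hF
  have hFcard : F.card = 4 := by
    rw [hF]
    rw [Finset.card_insert_of_notMem (by simp [hne, hwx_ne.symm, htx_ne.symm]),
      Finset.card_insert_of_notMem (by simp [hwy_ne.symm, hty_ne.symm]),
      Finset.card_insert_of_notMem (by simp [htw_ne.symm]),
      Finset.card_singleton]
  have hsub : F ⊆ T' := by
    intro C hC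
    rw [hF] at hC
    simp only [Finset.mem_insert, Finset.mem_singleton] at hC
    rcases hC with rfl | rfl | rfl | rfl
    · exact hmem x hx
    · exact hmem y hy
    · exact hmem w hwZ
    · exact hmem (y * w) htZ
  have hFT : F = T' := Finset.eq_of_subset_of_card_le hsub (by rw [hT4, hFcard])
  have hcover : ∀ g : G, g ∉ Subgroup.center G →
      Subgroup.centralizer ({g} : Set G) = Cx ∨ Subgroup.centralizer ({g} : Set G) = Cy ∨
      Subgroup.centralizer ({g} : Set G) = Cw ∨ Subgroup.centralizer ({g} : Set G) = Ct := by
    intro g hg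
    have := hmem g hg
    rw [← hFT, hF] at this
    simpa using this
  -- conclude that Cx = ⊤
  apply hx
  rw [← cg_eq_top_iff]
  rw [Subgroup.eq_top_iff']
  intro g
  by_cases hg : g ∈ Subgroup.center G
  · exact Subgroup.center_le_centralizer _ hg
  · rcases hcover g hg with h | h | h | h
    · have h' : Subgroup.centralizer ({g} : Set G) = Subgroup.centralizer ({x} : Set G) :=
        h.trans hCx
      exact h' ▸ cg_self_mem g
    · exact Subgroup.mem_centralizer_singleton_iff.mpr (edge_lemma hxy.symm h rfl)
    · exact Subgroup.mem_centralizer_singleton_iff.mpr (edge_lemma hxw.symm h rfl)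
    · exact Subgroup.mem_centralizer_singleton_iff.mpr (edge_lemma hxt.symm h rfl)

lemma key_comm (T' : Finset (Subgroup G)) (hT4 : T'.card = 4)
    (hmem : ∀ g : G, g ∉ Subgroup.center G → Subgroup.centralizer ({g} : Set G) ∈ T')
    {x y : G} (hx : x ∉ Subgroup.center G) (hy : y ∉ Subgroup.center G)
    (hxy : x * y = y * x) :
    Subgroup.centralizer ({x} : Set G) = Subgroup.centralizer ({y} : Set G) := by
  by_contra hne
  have hex : ∃ w, (w ∈ Subgroup.centralizer ({x} : Set G) ∧ w ∉ Subgroup.centralizer ({y} : Set G))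
      ∨ (w ∈ Subgroup.centralizer ({y} : Set G) ∧ w ∉ Subgroup.centralizer ({x} : Set G)) := by
    by_contra hc
    push_neg at hc
    apply hne
    ext g
    exact ⟨fun h => (hc g).1 h, fun h => (hc g).2 h⟩
  obtain ⟨w, hw | hw⟩ := hex
  · exact keyAux T' hT4 hmem hx hy hxy hne hw.1 hw.2
  · exact keyAux T' hT4 hmem hy hx hxy.symm (Ne.symm hne) hw.1 hw.2

end GroupCore


lemma arith_aux (a b c d h : ℕ) (ha : 2 ≤ a) (hb : 2 ≤ b) (hc : 2 ≤ c) (hd : 2 ≤ d)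
    (pab : a * b ≤ h) (pac : a * c ≤ h) (pad : a * d ≤ h)
    (hs : a + b + c + d = h + 3) : a ≤ 3 := by
  rcases le_total b c with h1 | h1 <;> rcases le_total b d with h2 | h2 <;>
    rcases le_total c d with h3 | h3 <;>
  · zify at *
    nlinarith

lemma arith_main (m1 m2 m3 m4 h : ℕ) (h1 : 2 ≤ m1) (h2 : 2 ≤ m2) (h3 : 2 ≤ m3) (h4 : 2 ≤ m4)
    (d1 : m1 ∣ h) (d2 : m2 ∣ h) (d3 : m3 ∣ h) (d4 : m4 ∣ h)
    (p12 : m1 * m2 ≤ h) (p13 : m1 * m3 ≤ h) (p14 : m1 * m4 ≤ h)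
    (p23 : m2 * m3 ≤ h) (p24 : m2 * m4 ≤ h) (p34 : m3 * m4 ≤ h)
    (hs : m1 + m2 + m3 + m4 = h + 3) : h = 9 ∨ h = 6 := by
  have b1 : m1 ≤ 3 := arith_aux m1 m2 m3 m4 h h1 h2 h3 h4 p12 p13 p14 hs
  have b2 : m2 ≤ 3 := arith_aux m2 m1 m3 m4 h h2 h1 h3 h4 (by linarith [p12, Nat.mul_comm m1 m2]) p23 p24 (by omega)
  have b3 : m3 ≤ 3 := arith_aux m3 m1 m2 m4 h h3 h1 h2 h4 (by rw [Nat.mul_comm]; exact p13) (by rw [Nat.mul_comm]; exact p23) p34 (by omega)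
  have b4 : m4 ≤ 3 := arith_aux m4 m1 m2 m3 h h4 h1 h2 h3 (by rw [Nat.mul_comm]; exact p14) (by rw [Nat.mul_comm]; exact p24) (by rw [Nat.mul_comm]; exact p34) (by omega)
  interval_cases m1 <;> interval_cases m2 <;> interval_cases m3 <;> interval_cases m4 <;> omega


set_option maxHeartbeats 1000000 in
/-- If `G` is a finite non-Abelian `5`-centralizer group (it has exactly `5` distinct
centralizers of elements), then `E(Γ_G) = 8(2|Z(G)| - 1)` or `E(Γ_G) = 10|Z(G)| - 8`. -/
theorem energy_commGraph_of_five_centralizer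
    (G : Type*) [Group G] [Fintype G] (hna : ∃ x y : G, x * y ≠ y * x)
    (h5 : Nat.card (Set.range fun x : G => Subgroup.centralizer ({x} : Set G)) = 5) :
    graphEnergy (commGraph G) = 8 * (2 * (Nat.card (Subgroup.center G) : ℝ) - 1) ∨
      graphEnergy (commGraph G) = 10 * (Nat.card (Subgroup.center G) : ℝ) - 8 := by
  classical
  -- the finset of all centralizers
  set T : Finset (Subgroup G) :=
    Finset.univ.image (fun x : G => Subgroup.centralizer ({x} : Set G)) with hT
  have hrange : (Set.range fun x : G => Subgroup.centralizer ({x} : Set G)) = ↑T := by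
    ext C; simp [hT]
  have hTcard : T.card = 5 := by
    have h := Nat.card_coe_set_eq ((T : Set (Subgroup G)))
    rw [Set.ncard_coe_finset] at h
    rw [hrange] at h5
    omega
  have hTop : (⊤ : Subgroup G) ∈ T := by
    refine Finset.mem_image.mpr ⟨1, Finset.mem_univ 1, ?_⟩
    exact cg_eq_top_iff.mpr (Subgroup.center G).one_mem
  set T' : Finset (Subgroup G) := T.erase ⊤ with hT'
  have hT'4 : T'.card = 4 := by rw [hT', Finset.card_erase_of_mem hTop, hTcard]
  have hmemT' : ∀ g : G, g ∉ Subgroup.center G → Subgroup.centralizer ({g} : Set G) ∈ T' := by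
    intro g hg
    exact Finset.mem_erase.mpr ⟨fun hc => hg (cg_eq_top_iff.mp hc),
      Finset.mem_image.mpr ⟨g, Finset.mem_univ g, rfl⟩⟩
  have key : ∀ {x y : G}, x ∉ Subgroup.center G → y ∉ Subgroup.center G → x * y = y * x →
      Subgroup.centralizer ({x} : Set G) = Subgroup.centralizer ({y} : Set G) :=
    fun hx hy hxy => key_comm T' hT'4 hmemT' hx hy hxy
  -- the four proper centralizers
  obtain ⟨C1, s3, hC1s3, hins, hs3⟩ := Finset.card_eq_succ.mp hT'4
  obtain ⟨C2, C3, C4, h23, h24, h34, rfl⟩ := Finset.card_eq_three.mp hs3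
  have hTeq : T' = {C1, C2, C3, C4} := hins.symm
  have h12 : C1 ≠ C2 := fun hc => hC1s3 (by rw [hc]; simp)
  have h13 : C1 ≠ C3 := fun hc => hC1s3 (by rw [hc]; simp)
  have h14 : C1 ≠ C4 := fun hc => hC1s3 (by rw [hc]; simp)
  -- representatives
  have hrep : ∀ C ∈ T', ∃ a : G, a ∉ Subgroup.center G ∧
      Subgroup.centralizer ({a} : Set G) = C := by
    intro C hC
    obtain ⟨a, _, ha⟩ := Finset.mem_image.mp (Finset.mem_of_mem_erase hC)
    refine ⟨a, fun haZ => Finset.ne_of_mem_erase hC ?_, ha⟩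
    rw [← ha]; exact cg_eq_top_iff.mpr haZ
  have hC1T' : C1 ∈ T' := by rw [hTeq]; simp
  have hC2T' : C2 ∈ T' := by rw [hTeq]; simp
  have hC3T' : C3 ∈ T' := by rw [hTeq]; simp
  have hC4T' : C4 ∈ T' := by rw [hTeq]; simp
  obtain ⟨a1, ha1Z, ha1⟩ := hrep C1 hC1T'
  obtain ⟨a2, ha2Z, ha2⟩ := hrep C2 hC2T'
  obtain ⟨a3, ha3Z, ha3⟩ := hrep C3 hC3T'
  obtain ⟨a4, ha4Z, ha4⟩ := hrep C4 hC4T'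
  -- intersection of two distinct proper centralizers is the center
  have hint : ∀ (a a' u : G), a ∉ Subgroup.center G → a' ∉ Subgroup.center G →
      Subgroup.centralizer ({a} : Set G) ≠ Subgroup.centralizer ({a'} : Set G) →
      u ∈ Subgroup.centralizer ({a} : Set G) → u ∈ Subgroup.centralizer ({a'} : Set G) →
      u ∈ Subgroup.center G := by
    intro a a' u haZ ha'Z hCC hu hu'
    by_contra huZ
    apply hCC
    rw [← key huZ haZ (Subgroup.mem_centralizer_singleton_iff.mp hu),
      ← key huZ ha'Z (Subgroup.mem_centralizer_singleton_iff.mp hu')]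
  have hsubZ : ∀ (C : Subgroup G) (a : G), Subgroup.centralizer ({a} : Set G) = C →
      Subgroup.center G ≤ C := fun C a ha => ha ▸ Subgroup.center_le_centralizer {a}
  -- cover of the noncentral elements
  have hcover : ∀ g : G, g ∉ Subgroup.center G → g ∈ C1 ∨ g ∈ C2 ∨ g ∈ C3 ∨ g ∈ C4 := by
    intro g hg
    have hmem2 := hmemT' g hg
    rw [hTeq] at hmem2
    simp only [Finset.mem_insert, Finset.mem_singleton] at hmem2
    rcases hmem2 with h | h | h | h
    · exact Or.inl (h ▸ cg_self_mem g)
    · exact Or.inr (Or.inl (h ▸ cg_self_mem g))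
    · exact Or.inr (Or.inr (Or.inl (h ▸ cg_self_mem g)))
    · exact Or.inr (Or.inr (Or.inr (h ▸ cg_self_mem g)))
  -- finset counting
  set ZF : Finset G := Finset.univ.filter (· ∈ Subgroup.center G) with hZF
  set CF : Subgroup G → Finset G := fun C => Finset.univ.filter (· ∈ C) with hCF
  set DF : Subgroup G → Finset G := fun C => CF C \ ZF with hDF
  have hZFsub : ∀ (C : Subgroup G) (a : G), Subgroup.centralizer ({a} : Set G) = C →
      ZF ⊆ CF C := by
    intro C a ha g hg
    simp only [hZF, hCF, Finset.mem_filter] at hg ⊢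
    exact ⟨hg.1, hsubZ C a ha hg.2⟩
  have hdisD : ∀ (Ci Cj : Subgroup G) (ai aj : G), ai ∉ Subgroup.center G →
      aj ∉ Subgroup.center G → Subgroup.centralizer ({ai} : Set G) = Ci →
      Subgroup.centralizer ({aj} : Set G) = Cj → Ci ≠ Cj → Disjoint (DF Ci) (DF Cj) := by
    intro Ci Cj ai aj haiZ hajZ hai haj hij
    rw [Finset.disjoint_left]
    intro g hg1 hg2
    simp only [hDF, hCF, Finset.mem_sdiff, Finset.mem_filter, hZF] at hg1 hg2
    refine hg2.2 ⟨Finset.mem_univ g, ?_⟩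
    refine hint ai aj g haiZ hajZ (fun hc => hij (by rw [← hai, ← haj, hc])) ?_ ?_
    · rw [hai]; exact hg1.1.2
    · rw [haj]; exact hg2.1.2
  have hd12 := hdisD C1 C2 a1 a2 ha1Z ha2Z ha1 ha2 h12
  have hd13 := hdisD C1 C3 a1 a3 ha1Z ha3Z ha1 ha3 h13
  have hd14 := hdisD C1 C4 a1 a4 ha1Z ha4Z ha1 ha4 h14
  have hd23 := hdisD C2 C3 a2 a3 ha2Z ha3Z ha2 ha3 h23
  have hd24 := hdisD C2 C4 a2 a4 ha2Z ha4Z ha2 ha4 h24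
  have hd34 := hdisD C3 C4 a3 a4 ha3Z ha4Z ha3 ha4 h34
  have hdisZD : ∀ C : Subgroup G, Disjoint ZF (DF C) := by
    intro C
    rw [hDF]
    exact Finset.disjoint_sdiff
  -- partition of G
  have hpart : (Finset.univ : Finset G) = ZF ∪ (DF C1 ∪ (DF C2 ∪ (DF C3 ∪ DF C4))) := by
    ext g
    simp only [Finset.mem_univ, true_iff, Finset.mem_union]
    by_cases hg : g ∈ Subgroup.center G
    · exact Or.inl (Finset.mem_filter.mpr ⟨Finset.mem_univ g, hg⟩)
    · have hgZF : g ∉ ZF := fun hc => hg (Finset.mem_filter.mp hc).2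
      have hD : ∀ C : Subgroup G, g ∈ C → g ∈ DF C := fun C h =>
        Finset.mem_sdiff.mpr ⟨Finset.mem_filter.mpr ⟨Finset.mem_univ g, h⟩, hgZF⟩
      rcases hcover g hg with h | h | h | h
      · exact Or.inr (Or.inl (hD C1 h))
      · exact Or.inr (Or.inr (Or.inl (hD C2 h)))
      · exact Or.inr (Or.inr (Or.inr (Or.inl (hD C3 h))))
      · exact Or.inr (Or.inr (Or.inr (Or.inr (hD C4 h))))
  have hcardG : Fintype.card G =
      ZF.card + (DF C1).card + (DF C2).card + (DF C3).card + (DF C4).card := by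
    rw [← Finset.card_univ, hpart]
    rw [Finset.card_union_of_disjoint (by
      refine Finset.disjoint_union_right.mpr ⟨hdisZD C1, ?_⟩
      refine Finset.disjoint_union_right.mpr ⟨hdisZD C2, ?_⟩
      exact Finset.disjoint_union_right.mpr ⟨hdisZD C3, hdisZD C4⟩)]
    rw [Finset.card_union_of_disjoint (by
      refine Finset.disjoint_union_right.mpr ⟨hd12, ?_⟩
      exact Finset.disjoint_union_right.mpr ⟨hd13, hd14⟩)]
    rw [Finset.card_union_of_disjoint (Finset.disjoint_union_right.mpr ⟨hd23, hd24⟩)]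
    rw [Finset.card_union_of_disjoint hd34]
    ring
  have hciF : ∀ (C : Subgroup G) (a : G), Subgroup.centralizer ({a} : Set G) = C →
      (DF C).card + ZF.card = (CF C).card := by
    intro C a ha
    rw [hDF]
    exact Finset.card_sdiff_add_card_eq_card (hZFsub C a ha)
  -- translation to Nat.card
  have hNatCard : ∀ C : Subgroup G, Nat.card C = (CF C).card := by
    intro C
    rw [Nat.card_eq_fintype_card]
    exact Fintype.card_of_subtype _ (fun x => by simp [hCF])
  have hzcard : Nat.card (Subgroup.center G) = ZF.card := by
    rw [Nat.card_eq_fintype_card]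
    exact Fintype.card_of_subtype _ (fun x => by simp [hZF])
  have hzpos : 0 < ZF.card := Finset.card_pos.mpr ⟨1, Finset.mem_filter.mpr
    ⟨Finset.mem_univ 1, (Subgroup.center G).one_mem⟩⟩
  -- group-theoretic numerology
  set z : ℕ := ZF.card with hz
  set h : ℕ := (Subgroup.center G).index with hh
  have hgz : Fintype.card G = z * h := by
    have := Subgroup.card_mul_index (Subgroup.center G)
    rw [hzcard, Nat.card_eq_fintype_card] at this
    rw [hz, hh]
    exact this.symm
  -- for each of the four subgroups: get m with CF-card = z * m and m * index = h
  have hmi : ∀ (C : Subgroup G) (a : G), a ∉ Subgroup.center G →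
      Subgroup.centralizer ({a} : Set G) = C →
      ∃ m : ℕ, (CF C).card = z * m ∧ m * C.index = h ∧ 2 ≤ m ∧ m ∣ h := by
    intro C a haZ ha
    obtain ⟨m, hm⟩ : z ∣ (CF C).card := by
      have := Subgroup.card_dvd_of_le (hsubZ C a ha)
      rwa [hzcard, hNatCard] at this
    have hck : (CF C).card * C.index = z * h := by
      have := Subgroup.card_mul_index C
      rw [hNatCard, Nat.card_eq_fintype_card] at this
      rw [this, hgz]
    have hmk : m * C.index = h := by
      apply Nat.eq_of_mul_eq_mul_left hzpos
      rw [← mul_assoc, ← hm, hck]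
    have haD : a ∈ DF C := by
      refine Finset.mem_sdiff.mpr ⟨Finset.mem_filter.mpr ⟨Finset.mem_univ a, ?_⟩, ?_⟩
      · exact ha ▸ cg_self_mem a
      · exact fun hc => haZ (Finset.mem_filter.mp hc).2
    have hdpos : 1 ≤ (DF C).card := Finset.card_pos.mpr ⟨a, haD⟩
    have hcd := hciF C a ha
    have hm2 : 2 ≤ m := by
      by_contra hc
      push_neg at hc
      have : z * m ≤ z * 1 := Nat.mul_le_mul_left z (by omega)
      omega
    exact ⟨m, hm, hmk, hm2, ⟨C.index, hmk.symm⟩⟩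
  obtain ⟨m1, hm1, hk1, h2m1, hd1⟩ := hmi C1 a1 ha1Z ha1
  obtain ⟨m2, hm2, hk2, h2m2, hd2⟩ := hmi C2 a2 ha2Z ha2
  obtain ⟨m3, hm3, hk3, h2m3, hd3⟩ := hmi C3 a3 ha3Z ha3
  obtain ⟨m4, hm4, hk4, h2m4, hd4⟩ := hmi C4 a4 ha4Z ha4
  -- pairwise products bounded by h
  have hinf : ∀ (Ci Cj : Subgroup G) (ai aj : G), ai ∉ Subgroup.center G →
      aj ∉ Subgroup.center G → Subgroup.centralizer ({ai} : Set G) = Ci →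
      Subgroup.centralizer ({aj} : Set G) = Cj → Ci ≠ Cj → Ci ⊓ Cj = Subgroup.center G := by
    intro Ci Cj ai aj haiZ hajZ hai haj hij
    apply le_antisymm
    · intro u hu
      rw [Subgroup.mem_inf] at hu
      refine hint ai aj u haiZ hajZ (fun hc => hij (by rw [← hai, ← haj, hc])) ?_ ?_
      · rw [hai]; exact hu.1
      · rw [haj]; exact hu.2
    · exact le_inf (hsubZ Ci ai hai) (hsubZ Cj aj haj)
  have hpij : ∀ (Ci Cj : Subgroup G) (mi mj : ℕ), Ci ⊓ Cj = Subgroup.center G →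
      mi * Ci.index = h → mj * Cj.index = h → mi * mj ≤ h := by
    intro Ci Cj mi mj hinter hmik hmjk
    have hidx : h ≤ Ci.index * Cj.index := by
      rw [hh, ← hinter]
      exact Subgroup.index_inf_le
    have hkpos : 0 < Ci.index * Cj.index :=
      Nat.mul_pos (Nat.pos_of_ne_zero Subgroup.index_ne_zero_of_finite)
        (Nat.pos_of_ne_zero Subgroup.index_ne_zero_of_finite)
    apply Nat.le_of_mul_le_mul_right _ hkpos
    calc mi * mj * (Ci.index * Cj.index) = (mi * Ci.index) * (mj * Cj.index) := by ring
      _ = h * h := by rw [hmik, hmjk]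
      _ ≤ h * (Ci.index * Cj.index) := Nat.mul_le_mul_left h hidx
  have p12 := hpij C1 C2 m1 m2 (hinf C1 C2 a1 a2 ha1Z ha2Z ha1 ha2 h12) hk1 hk2
  have p13 := hpij C1 C3 m1 m3 (hinf C1 C3 a1 a3 ha1Z ha3Z ha1 ha3 h13) hk1 hk3
  have p14 := hpij C1 C4 m1 m4 (hinf C1 C4 a1 a4 ha1Z ha4Z ha1 ha4 h14) hk1 hk4
  have p23 := hpij C2 C3 m2 m3 (hinf C2 C3 a2 a3 ha2Z ha3Z ha2 ha3 h23) hk2 hk3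
  have p24 := hpij C2 C4 m2 m4 (hinf C2 C4 a2 a4 ha2Z ha4Z ha2 ha4 h24) hk2 hk4
  have p34 := hpij C3 C4 m3 m4 (hinf C3 C4 a3 a4 ha3Z ha4Z ha3 ha4 h34) hk3 hk4
  -- the sum equation
  have hc1 := hciF C1 a1 ha1
  have hc2 := hciF C2 a2 ha2
  have hc3 := hciF C3 a3 ha3
  have hc4 := hciF C4 a4 ha4
  have hsum : m1 + m2 + m3 + m4 = h + 3 := by
    apply Nat.eq_of_mul_eq_mul_left hzpos
    calc z * (m1 + m2 + m3 + m4) = z * m1 + z * m2 + z * m3 + z * m4 := by ring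
      _ = (CF C1).card + (CF C2).card + (CF C3).card + (CF C4).card := by
          rw [← hm1, ← hm2, ← hm3, ← hm4]
      _ = 3 * z + z * h := by omega
      _ = z * (h + 3) := by ring
  have harith : h = 9 ∨ h = 6 :=
    arith_main m1 m2 m3 m4 h h2m1 h2m2 h2m3 h2m4 hd1 hd2 hd3 hd4 p12 p13 p14 p23 p24 p34 hsum
  -- the number of noncentral elements
  have hVfilter : Nat.card {g : G // g ∉ Subgroup.center G}
      = (Finset.univ.filter (fun g : G => g ∉ Subgroup.center G)).card := by
    rw [Nat.card_eq_fintype_card]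
    exact Fintype.card_of_subtype _ (fun x => by simp)
  have hVcard : Nat.card {g : G // g ∉ Subgroup.center G} + z = Fintype.card G := by
    rw [hVfilter, hz, hZF]
    rw [add_comm]
    exact Finset.card_filter_add_card_filter_not _
  -- the graph is a blow-up of the 4-element type
  have hcardι : Fintype.card {C : Subgroup G // C ∈ T'} = 4 := by
    rw [Fintype.card_coe]; exact hT'4
  set f : {g : G // g ∉ Subgroup.center G} → {C : Subgroup G // C ∈ T'} :=
    fun v => ⟨Subgroup.centralizer ({(v : G)} : Set G), hmemT' v.1 v.2⟩ with hf
  have hfsurj : Function.Surjective f := by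
    rintro ⟨C, hC⟩
    obtain ⟨a, haZ, ha⟩ := hrep C hC
    exact ⟨⟨a, haZ⟩, Subtype.ext ha⟩
  have hadj : ∀ u v, (commGraph G).Adj u v ↔ u ≠ v ∧ f u = f v := by
    intro u v
    change u ≠ v ∧ (u : G) * v = (v : G) * u ↔ _
    constructor
    · rintro ⟨hne, hcomm⟩
      exact ⟨hne, Subtype.ext (key u.2 v.2 hcomm)⟩
    · rintro ⟨hne, hfeq⟩
      refine ⟨hne, ?_⟩
      have hcc : Subgroup.centralizer ({(u : G)} : Set G)
          = Subgroup.centralizer ({(v : G)} : Set G) := congrArg Subtype.val hfeq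
      have hv : (v : G) ∈ Subgroup.centralizer ({(u : G)} : Set G) :=
        hcc ▸ cg_self_mem (v : G)
      exact (Subgroup.mem_centralizer_singleton_iff.mp hv).symm
  have henergy := energy_blowup (commGraph G) f hfsurj hadj
  rw [hcardι] at henergy
  have hVfin : (Fintype.card {g : G // g ∉ Subgroup.center G} : ℕ)
      = Nat.card {g : G // g ∉ Subgroup.center G} := (Nat.card_eq_fintype_card).symm
  -- conclude
  rcases harith with h9 | h6
  · left
    rw [henergy, hVfin]
    have hVval : Nat.card {g : G // g ∉ Subgroup.center G} = 8 * z := by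
      rw [h9] at hgz; omega
    rw [hVval, ← hzcard]
    push_cast
    ring
  · right
    rw [henergy, hVfin]
    have hVval : Nat.card {g : G // g ∉ Subgroup.center G} = 5 * z := by
      rw [h6] at hgz; omega
    rw [hVval, ← hzcard]
    push_cast
    ring
end
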